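/- arXiv:2410.05171 — 10 statements merged into one kernel-verified Lean document; each statement's English description precedes it below -/
import Mathlib

section
/- Full-protocol residual error: Let H_X ∈ 𝔽₂^{m_X×n} and H_Z ∈ 𝔽₂^{m_Z×n} satisfy H_X·H_Zᵀ = 0, let d = ℓ ≥ 2, and form the thickened matrices H̃_X, H̃_Z, M̃_Z from the length-d repetition code. Assume: (i) H̃_Z is (d, x ↦ x³/4)-sound relative to H̃_X; (ii) ker M̃_Z equals the column space of H̃_Z; (iii) H_X is (t,f)-confined relative to H_Z with f : ℕ → ℝ monotone increasing and d > t. Stage 1: for any e ∈ 𝔽₂^{nd+m_X(d−1)}, any s_e ∈ 𝔽₂^{m_Zd+n(d−1)} with 2|s_e| ≤ d, and any vector ŝ of minimum Hamming weight subject to M̃_Z(H̃_Z e + s_e + ŝ) = 0, there exists ê with H̃_Z ê = H̃_Z e + s_e + ŝ such that the boundary restriction e_X := (e+ê)^{(1)} ∈ 𝔽₂ⁿ satisfies ‖e_X‖_{H_X} ≤ 2|s_e|³. Stage 2: for any e¹,…,e^{d−1} ∈ 𝔽₂ⁿ and s_e¹,…,s_e^{d−1} ∈ 𝔽₂^{m_X}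 with ‖e^τ‖_{H_Z} ≤ t/4 and f(2|s_e^τ|) ≤ t/4 for all τ, defining ē¹ = e¹ and, for τ = 1,…,d−1, letting ŝ^τ be any minimum-Hamming-weight vector such that some e′ with ‖e′‖_{H_Z} ≤ t/2 satisfies H_X e′ = H_X ē^τ + s_e^τ + ŝ^τ, letting ê^τ be any minimum-Hamming-weight vector with H_X ê^τ = H_X ē^τ + s_e^τ + ŝ^τ, and setting ē^{τ+1} = e^{τ+1} + ē^τ + ê^τ for τ < d−1, the residual Z error e_Z := ē^{d−1} + ê^{d−1} satisfies ‖e_Z‖_{H_Z} ≤ t/4 ≤ d/4. -/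
open Matrix Kronecker

/-- The row space of a matrix over 𝔽₂: the span of its rows. -/
def rowSpace {m n : Type*} (A : Matrix m n (ZMod 2)) :
    Submodule (ZMod 2) (n → ZMod 2) :=
  Submodule.span (ZMod 2) (Set.range A)

/-- The reduced weight of a vector `v` relative to a matrix `A`:
`‖v‖_A = min { |v+u| : u ∈ rs(A) }`. -/
noncomputable def redW {m n : Type*} [Fintype n] (A : Matrix m n (ZMod 2))
    (v : n → ZMod 2) : ℕ :=
  sInf {k | ∃ u ∈ rowSpace A, hammingNorm (v + u) = k}

/-- `H` is `(t,f)`-sound relative to `A`. -/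
def Sound {m n a : Type*} [Fintype m] [Fintype n] (t : ℕ) (f : ℕ → ℝ)
    (H : Matrix m n (ZMod 2)) (A : Matrix a n (ZMod 2)) : Prop :=
  ∀ s : m → ZMod 2, (∃ e, H.mulVec e = s) → hammingNorm s ≤ t →
    ∃ e, H.mulVec e = s ∧ (redW A e : ℝ) ≤ f (hammingNorm s)

/-- `H` is `(t,f)`-confined relative to `A`. -/
def Confined {m n a : Type*} [Fintype m] [Fintype n] (t : ℕ) (f : ℕ → ℝ)
    (H : Matrix m n (ZMod 2)) (A : Matrix a n (ZMod 2)) : Prop :=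
  ∀ e : n → ZMod 2, redW A e ≤ t → (redW A e : ℝ) ≤ f (hammingNorm (H.mulVec e))

/-- Parity-check matrix of the length-`ℓ` repetition code. -/
def repH (ℓ : ℕ) : Matrix (Fin (ℓ - 1)) (Fin ℓ) (ZMod 2) :=
  Matrix.of fun j i => if i.val = j.val ∨ i.val = j.val + 1 then 1 else 0

/-- Thickened X-check matrix `H̃_X = ( H_X⊗I_ℓ | I_{m_X}⊗hᵀ )`. -/
def thickHX {mX n : ℕ} (HX : Matrix (Fin mX) (Fin n) (ZMod 2)) (ℓ : ℕ) :
    Matrix (Fin mX × Fin ℓ) ((Fin n × Fin ℓ) ⊕ (Fin mX × Fin (ℓ - 1))) (ZMod 2) :=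
  Matrix.fromCols (HX ⊗ₖ (1 : Matrix (Fin ℓ) (Fin ℓ) (ZMod 2)))
    ((1 : Matrix (Fin mX) (Fin mX) (ZMod 2)) ⊗ₖ (repH ℓ)ᵀ)

/-- Thickened Z-check matrix `H̃_Z = [[ H_Z⊗I_ℓ , 0 ],[ I_n⊗h , H_Xᵀ⊗I_{ℓ−1} ]]`. -/
def thickHZ {mX mZ n : ℕ} (HX : Matrix (Fin mX) (Fin n) (ZMod 2))
    (HZ : Matrix (Fin mZ) (Fin n) (ZMod 2)) (ℓ : ℕ) :
    Matrix ((Fin mZ × Fin ℓ) ⊕ (Fin n × Fin (ℓ - 1)))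
      ((Fin n × Fin ℓ) ⊕ (Fin mX × Fin (ℓ - 1))) (ZMod 2) :=
  Matrix.fromBlocks (HZ ⊗ₖ (1 : Matrix (Fin ℓ) (Fin ℓ) (ZMod 2))) 0
    ((1 : Matrix (Fin n) (Fin n) (ZMod 2)) ⊗ₖ repH ℓ)
    (HXᵀ ⊗ₖ (1 : Matrix (Fin (ℓ - 1)) (Fin (ℓ - 1)) (ZMod 2)))

/-- Metacheck matrix `M̃_Z = ( I_{m_Z}⊗h | H_Z⊗I_{ℓ−1} )`. -/
def metaMZ {mZ n : ℕ} (HZ : Matrix (Fin mZ) (Fin n) (ZMod 2)) (ℓ : ℕ) :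
    Matrix (Fin mZ × Fin (ℓ - 1))
      ((Fin mZ × Fin ℓ) ⊕ (Fin n × Fin (ℓ - 1))) (ZMod 2) :=
  Matrix.fromCols ((1 : Matrix (Fin mZ) (Fin mZ) (ZMod 2)) ⊗ₖ repH ℓ)
    (HZ ⊗ₖ (1 : Matrix (Fin (ℓ - 1)) (Fin (ℓ - 1)) (ZMod 2)))

/-- Sheet-`τ` component of a vector on the thickened qubit space. -/
def sheet {n ℓ mX : ℕ} (τ : Fin ℓ)
    (v : (Fin n × Fin ℓ) ⊕ (Fin mX × Fin (ℓ - 1)) → ZMod 2) : Fin n → ZMod 2 :=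
  fun i => v (Sum.inl (i, τ))



section Aux

variable {m n : Type*} [Fintype n]

lemma hammingNorm_add_le {x y : n → ZMod 2} :
    hammingNorm (x + y) ≤ hammingNorm x + hammingNorm y := by
  have h1 : hammingNorm (x + y) = hammingDist (x + y) 0 := (hammingDist_zero_right _).symm
  have h2 := hammingDist_triangle (x + y) y (0 : n → ZMod 2)
  have h3 : hammingDist (x + y) y = hammingNorm x := by
    rw [hammingDist_eq_hammingNorm]; congr 1; funext i; simp only [Pi.sub_apply, Pi.add_apply, Pi.neg_apply]
    generalize x i = a; generalize y i = b; revert a b; decide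
  rw [h1]
  calc hammingDist (x + y) 0 ≤ hammingDist (x + y) y + hammingDist y 0 := h2
    _ = hammingNorm x + hammingNorm y := by rw [h3, hammingDist_zero_right]

lemma redW_exists (A : Matrix m n (ZMod 2)) (v : n → ZMod 2) :
    ∃ u ∈ rowSpace A, hammingNorm (v + u) = redW A v := by
  have hne : {k | ∃ u ∈ rowSpace A, hammingNorm (v + u) = k}.Nonempty :=
    ⟨hammingNorm v, 0, Submodule.zero_mem _, by rw [add_zero]⟩
  exact Nat.sInf_mem hne

lemma redW_le (A : Matrix m n (ZMod 2)) (v : n → ZMod 2) {u : n → ZMod 2}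
    (hu : u ∈ rowSpace A) : redW A v ≤ hammingNorm (v + u) :=
  Nat.sInf_le ⟨u, hu, rfl⟩

lemma redW_le_norm (A : Matrix m n (ZMod 2)) (v : n → ZMod 2) :
    redW A v ≤ hammingNorm v := by
  have := redW_le A v (Submodule.zero_mem (rowSpace A))
  rwa [add_zero] at this

lemma redW_add_le (A : Matrix m n (ZMod 2)) (v w : n → ZMod 2) :
    redW A (v + w) ≤ redW A v + redW A w := by
  obtain ⟨u, hu, hun⟩ := redW_exists A v
  obtain ⟨u', hu', hun'⟩ := redW_exists A w
  have hmem : u + u' ∈ rowSpace A := Submodule.add_mem _ hu hu'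
  calc redW A (v + w) ≤ hammingNorm (v + w + (u + u')) := redW_le A _ hmem
    _ = hammingNorm ((v + u) + (w + u')) := by ring_nf
    _ ≤ hammingNorm (v + u) + hammingNorm (w + u') := hammingNorm_add_le
    _ = redW A v + redW A w := by rw [hun, hun']

lemma mulVec_eq_zero_of_mem_rowSpace [Fintype m] {k : Type*} [Fintype k]
    {B : Matrix k n (ZMod 2)} {A : Matrix m n (ZMod 2)} (hBA : B * Aᵀ = 0)
    {u : n → ZMod 2} (hu : u ∈ rowSpace A) : B.mulVec u = 0 := by
  induction hu using Submodule.span_induction with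
  | mem x hx =>
    obtain ⟨i, rfl⟩ := hx
    funext j
    have := congrFun (congrFun hBA j) i
    simpa [Matrix.mul_apply, Matrix.mulVec, Matrix.zero_apply, dotProduct,
      Matrix.transpose_apply] using this
  | zero => simp [Matrix.mulVec_zero]
  | add x y _ _ hx hy => rw [Matrix.mulVec_add, hx, hy, add_zero]
  | smul a x _ hx => rw [Matrix.mulVec_smul, hx, smul_zero]

end Aux

section SheetAux

variable {mX n ℓ : ℕ}

lemma sheet_add (τ : Fin ℓ) (v w : (Fin n × Fin ℓ) ⊕ (Fin mX × Fin (ℓ - 1)) → ZMod 2) :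
    sheet τ (v + w) = sheet τ v + sheet τ w := rfl

lemma hammingNorm_sheet_le (τ : Fin ℓ)
    (v : (Fin n × Fin ℓ) ⊕ (Fin mX × Fin (ℓ - 1)) → ZMod 2) :
    hammingNorm (sheet τ v) ≤ hammingNorm v := by
  classical
  unfold hammingNorm sheet
  apply Finset.card_le_card_of_injOn (fun i => Sum.inl (i, τ))
  · intro i hi
    simp only [Finset.mem_filter, Finset.mem_univ, true_and] at hi ⊢
    simpa using hi
  · intro a _ b _ hab
    simpa using hab

lemma sheet_mem_rowSpace (HX : Matrix (Fin mX) (Fin n) (ZMod 2)) (τ : Fin ℓ)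
    {u : (Fin n × Fin ℓ) ⊕ (Fin mX × Fin (ℓ - 1)) → ZMod 2}
    (hu : u ∈ rowSpace (thickHX HX ℓ)) : sheet τ u ∈ rowSpace HX := by
  induction hu using Submodule.span_induction with
  | mem x hx =>
    obtain ⟨⟨k, τ'⟩, rfl⟩ := hx
    have : sheet τ (thickHX HX ℓ (k, τ')) =
        (if τ' = τ then (1 : ZMod 2) else 0) • HX k := by
      funext i
      simp only [sheet, thickHX, Matrix.fromCols, Matrix.of_apply,
        Matrix.kroneckerMap_apply, Pi.smul_apply, smul_eq_mul]
      by_cases h : τ' = τ <;>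
        simp [h, Matrix.one_apply, mul_comm]
    rw [this]
    exact Submodule.smul_mem _ _ (Submodule.subset_span ⟨k, rfl⟩)
  | zero => exact Submodule.zero_mem _
  | add x y _ _ hx hy => exact Submodule.add_mem _ hx hy
  | smul a x _ hx =>
    have : sheet τ (a • x) = a • sheet τ x := rfl
    rw [this]; exact Submodule.smul_mem _ _ hx

lemma redW_sheet_le (HX : Matrix (Fin mX) (Fin n) (ZMod 2)) (τ : Fin ℓ)
    (v : (Fin n × Fin ℓ) ⊕ (Fin mX × Fin (ℓ - 1)) → ZMod 2) :
    redW HX (sheet τ v) ≤ redW (thickHX HX ℓ) v := by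
  obtain ⟨u, hu, hun⟩ := redW_exists (thickHX HX ℓ) v
  calc redW HX (sheet τ v) ≤ hammingNorm (sheet τ v + sheet τ u) :=
        redW_le _ _ (sheet_mem_rowSpace HX τ hu)
    _ = hammingNorm (sheet τ (v + u)) := by rw [sheet_add]
    _ ≤ hammingNorm (v + u) := hammingNorm_sheet_le _ _
    _ = redW (thickHX HX ℓ) v := hun

end SheetAux

theorem full_protocol_residual_error
    {mX mZ n : ℕ}
    (HX : Matrix (Fin mX) (Fin n) (ZMod 2))
    (HZ : Matrix (Fin mZ) (Fin n) (ZMod 2))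
    (hCSS : HX * HZᵀ = 0)
    (d : ℕ) (hd : 2 ≤ d)
    (t : ℕ) (ht : 0 < t) (f : ℕ → ℝ) (hf : Monotone f)
    -- (i) H̃_Z is (d, x ↦ x³/4)-sound relative to H̃_X
    (hsound : Sound d (fun x => (x : ℝ) ^ 3 / 4) (thickHZ HX HZ d) (thickHX HX d))
    -- (ii) ker M̃_Z equals the column space of H̃_Z
    (hker : ∀ s : (Fin mZ × Fin d) ⊕ (Fin n × Fin (d - 1)) → ZMod 2,
      (metaMZ HZ d).mulVec s = 0 ↔ ∃ e, (thickHZ HX HZ d).mulVec e = s)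
    -- (iii) H_X is (t,f)-confined relative to H_Z and d > t
    (hconf : Confined t f HX HZ) (hdt : t < d) :
    -- Stage 1
    (∀ (e : (Fin n × Fin d) ⊕ (Fin mX × Fin (d - 1)) → ZMod 2)
       (se shat : (Fin mZ × Fin d) ⊕ (Fin n × Fin (d - 1)) → ZMod 2),
      2 * hammingNorm se ≤ d →
      (metaMZ HZ d).mulVec ((thickHZ HX HZ d).mulVec e + se + shat) = 0 →
      (∀ s' : (Fin mZ × Fin d) ⊕ (Fin n × Fin (d - 1)) → ZMod 2,
        (metaMZ HZ d).mulVec ((thickHZ HX HZ d).mulVec e + se + s') = 0 →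
        hammingNorm shat ≤ hammingNorm s') →
      ∃ ehat, (thickHZ HX HZ d).mulVec ehat = (thickHZ HX HZ d).mulVec e + se + shat ∧
        (redW HX (sheet (⟨0, by omega⟩ : Fin d) (e + ehat)) : ℝ) ≤
          2 * (hammingNorm se : ℝ) ^ 3) ∧
    -- Stage 2
    (∀ (e ebar ehat : ℕ → Fin n → ZMod 2) (se shat : ℕ → Fin mX → ZMod 2),
      (∀ τ < d - 1, (redW HZ (e τ) : ℝ) ≤ (t : ℝ) / 4) →
      (∀ τ < d - 1, f (2 * hammingNorm (se τ)) ≤ (t : ℝ) / 4) →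
      ebar 0 = e 0 →
      (∀ τ < d - 1,
        (∃ e', (redW HZ e' : ℝ) ≤ (t : ℝ) / 2 ∧
          HX.mulVec e' = HX.mulVec (ebar τ) + se τ + shat τ) ∧
        (∀ s' : Fin mX → ZMod 2,
          (∃ e', (redW HZ e' : ℝ) ≤ (t : ℝ) / 2 ∧
            HX.mulVec e' = HX.mulVec (ebar τ) + se τ + s') →
          hammingNorm (shat τ) ≤ hammingNorm s')) →
      (∀ τ < d - 1,
        HX.mulVec (ehat τ) = HX.mulVec (ebar τ) + se τ + shat τ ∧
        (∀ e' : Fin n → ZMod 2,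
          HX.mulVec e' = HX.mulVec (ebar τ) + se τ + shat τ →
          hammingNorm (ehat τ) ≤ hammingNorm e')) →
      (∀ τ, τ + 1 < d - 1 → ebar (τ + 1) = e (τ + 1) + ebar τ + ehat τ) →
      (redW HZ (ebar (d - 2) + ehat (d - 2)) : ℝ) ≤ (t : ℝ) / 4 ∧
        (t : ℝ) / 4 ≤ (d : ℝ) / 4) := by
  have ha2 : ∀ a : ZMod 2, a + a = 0 := by decide
  have ha3 : ∀ a b c : ZMod 2, a + (a + b + c) = b + c := by decide
  have ha1 : ∀ a b : ZMod 2, a + (a + b) = b := by decide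
  constructor
  · -- Stage 1
    intro e se shat hse hmeta hmin
    have hshat_le : hammingNorm shat ≤ hammingNorm se := by
      apply hmin se
      have hz : (thickHZ HX HZ d).mulVec e + se + se = (thickHZ HX HZ d).mulVec e := by
        rw [add_assoc]
        funext i
        simp [ha2 (se i)]
      rw [hz]
      exact (hker _).mpr ⟨e, rfl⟩
    obtain ⟨e'', he''⟩ := (hker _).mp hmeta
    have hsyn : (thickHZ HX HZ d).mulVec (e'' + e) = se + shat := by
      rw [Matrix.mulVec_add, he'']
      funext i
      simp only [Pi.add_apply]
      have := ha3 ((thickHZ HX HZ d).mulVec e i) (se i) (shat i)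
      -- goal: (Hz e + se + shat) i + (Hz e) i = (se + shat) i
      have h' : (thickHZ HX HZ d).mulVec e i + se i + shat i
          + (thickHZ HX HZ d).mulVec e i = se i + shat i := by
        have hcomm : (thickHZ HX HZ d).mulVec e i + se i + shat i
            + (thickHZ HX HZ d).mulVec e i
            = (thickHZ HX HZ d).mulVec e i
              + ((thickHZ HX HZ d).mulVec e i + se i + shat i) := by ring
        rw [hcomm, this]
      exact h'
    have hwle : hammingNorm (se + shat) ≤ 2 * hammingNorm se := by
      have := hammingNorm_add_le (x := se) (y := shat)
      omega
    have hwd : hammingNorm (se + shat) ≤ d := le_trans hwle hse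
    obtain ⟨e₀, he₀, hred⟩ := hsound (se + shat) ⟨e'' + e, hsyn⟩ hwd
    refine ⟨e + e₀, ?_, ?_⟩
    · rw [Matrix.mulVec_add, he₀, add_assoc]
    · have hsheet : e + (e + e₀) = e₀ := by
        funext i; simp only [Pi.add_apply]; exact ha1 (e i) (e₀ i)
      rw [hsheet]
      have h1 : (redW HX (sheet (⟨0, by omega⟩ : Fin d) e₀) : ℝ)
          ≤ (redW (thickHX HX d) e₀ : ℝ) := by
        exact_mod_cast redW_sheet_le HX _ e₀
      have h2 : ((hammingNorm (se + shat) : ℝ)) ^ 3 / 4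
          ≤ ((2 * hammingNorm se : ℕ) : ℝ) ^ 3 / 4 := by
        have : ((hammingNorm (se + shat) : ℕ) : ℝ) ≤ ((2 * hammingNorm se : ℕ) : ℝ) := by
          exact_mod_cast hwle
        have hp := pow_le_pow_left₀ (by positivity) this 3
        linarith
      have h3 : ((2 * hammingNorm se : ℕ) : ℝ) ^ 3 / 4
          = 2 * (hammingNorm se : ℝ) ^ 3 := by
        push_cast; ring
      calc (redW HX (sheet (⟨0, by omega⟩ : Fin d) e₀) : ℝ)
          ≤ (redW (thickHX HX d) e₀ : ℝ) := h1
        _ ≤ ((hammingNorm (se + shat) : ℕ) : ℝ) ^ 3 / 4 := hred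
        _ ≤ ((2 * hammingNorm se : ℕ) : ℝ) ^ 3 / 4 := h2
        _ = 2 * (hammingNorm se : ℝ) ^ 3 := h3
  · -- Stage 2
    intro e ebar ehat se shat h1 h2 h0 h4 h5 hrec
    have key : ∀ τ, τ < d - 1 → (redW HZ (ebar τ) : ℝ) ≤ (t : ℝ) / 2 →
        (redW HZ (ebar τ + ehat τ) : ℝ) ≤ (t : ℝ) / 4 := by
      intro τ hτ hbar
      obtain ⟨⟨e', he'r, he's⟩, hminS⟩ := h4 τ hτ
      obtain ⟨hsyn, hminE⟩ := h5 τ hτ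
      have hsh : hammingNorm (shat τ) ≤ hammingNorm (se τ) := by
        apply hminS
        refine ⟨ebar τ, hbar, ?_⟩
        rw [add_assoc]
        funext i
        simp [ha2 (se τ i)]
      obtain ⟨u, hu, hun⟩ := redW_exists HZ e'
      have hu0 : HX.mulVec u = 0 := mulVec_eq_zero_of_mem_rowSpace hCSS hu
      have hsame : HX.mulVec (e' + u) = HX.mulVec (ebar τ) + se τ + shat τ := by
        rw [Matrix.mulVec_add, hu0, add_zero, he's]
      have hle : hammingNorm (ehat τ) ≤ hammingNorm (e' + u) := hminE _ hsame
      have hehat : (hammingNorm (ehat τ) : ℝ) ≤ (t : ℝ) / 2 := by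
        have : (hammingNorm (e' + u) : ℝ) = (redW HZ e' : ℝ) := by exact_mod_cast hun
        calc (hammingNorm (ehat τ) : ℝ) ≤ (hammingNorm (e' + u) : ℝ) := by exact_mod_cast hle
          _ = (redW HZ e' : ℝ) := this
          _ ≤ (t : ℝ) / 2 := he'r
      have hsumR : (redW HZ (ebar τ + ehat τ) : ℝ) ≤ (t : ℝ) := by
        have hr1 : (redW HZ (ebar τ + ehat τ) : ℝ)
            ≤ (redW HZ (ebar τ) : ℝ) + (redW HZ (ehat τ) : ℝ) := by
          exact_mod_cast redW_add_le HZ (ebar τ) (ehat τ)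
        have hr2 : (redW HZ (ehat τ) : ℝ) ≤ (hammingNorm (ehat τ) : ℝ) := by
          exact_mod_cast redW_le_norm HZ (ehat τ)
        linarith
      have hsumN : redW HZ (ebar τ + ehat τ) ≤ t := by exact_mod_cast hsumR
      have hconf' := hconf _ hsumN
      have hsyn' : HX.mulVec (ebar τ + ehat τ) = se τ + shat τ := by
        rw [Matrix.mulVec_add, hsyn]
        funext i
        simp only [Pi.add_apply]
        exact ha3 (HX.mulVec (ebar τ) i) (se τ i) (shat τ i)
      have hw : hammingNorm (se τ + shat τ) ≤ 2 * hammingNorm (se τ) := by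
        have := hammingNorm_add_le (x := se τ) (y := shat τ)
        omega
      calc (redW HZ (ebar τ + ehat τ) : ℝ)
          ≤ f (hammingNorm (HX.mulVec (ebar τ + ehat τ))) := hconf'
        _ = f (hammingNorm (se τ + shat τ)) := by rw [hsyn']
        _ ≤ f (2 * hammingNorm (se τ)) := hf hw
        _ ≤ (t : ℝ) / 4 := h2 τ hτ
    have inv : ∀ τ, τ < d - 1 → (redW HZ (ebar τ) : ℝ) ≤ (t : ℝ) / 2 := by
      intro τ
      induction τ with
      | zero =>
        intro _
        rw [h0]
        have := h1 0 (by omega)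
        have ht0 : (0 : ℝ) ≤ (t : ℝ) := Nat.cast_nonneg t
        linarith
      | succ τ ih =>
        intro hτ1
        have hτ : τ < d - 1 := by omega
        rw [hrec τ hτ1, add_assoc]
        have hq := key τ hτ (ih hτ)
        have he := h1 (τ + 1) hτ1
        have hr1 : (redW HZ (e (τ + 1) + (ebar τ + ehat τ)) : ℝ)
            ≤ (redW HZ (e (τ + 1)) : ℝ) + (redW HZ (ebar τ + ehat τ) : ℝ) := by
          exact_mod_cast redW_add_le HZ (e (τ + 1)) (ebar τ + ehat τ)
        linarith
    have hlt : d - 2 < d - 1 := by omega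
    refine ⟨key (d - 2) hlt (inv (d - 2) hlt), ?_⟩
    have : (t : ℝ) ≤ (d : ℝ) := by exact_mod_cast hdt.le
    linarith
end

section
/- Stage-1 residual X error (Lemma 1): Let H ∈ 𝔽₂^{m×n}, M ∈ 𝔽₂^{r×m}, and A ∈ 𝔽₂^{a×n}. Assume that ker M equals the column space of H, and that H is (t,f)-sound relative to A with f : ℕ → ℝ monotone increasing. Let e ∈ 𝔽₂ⁿ with syndrome s = He, and let s_e ∈ 𝔽₂^m satisfy 2|s_e| ≤ t. Let ŝ ∈ 𝔽₂^m be any vector of minimum Hamming weight subject to M(s + s_e + ŝ) = 0. Then s_e + ŝ lies in the column space of H, and there exists ê ∈ 𝔽₂ⁿ with Hê = s + s_e + ŝ and ‖e + ê‖_A ≤ f(2|s_e|). In particular, when f(x) = x³/4 this yields ‖e + ê‖_A ≤ 2|s_e|³. -/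
open Matrix Kronecker

theorem stage1_residual_X_error
    {m n r a : ℕ}
    (H : Matrix (Fin m) (Fin n) (ZMod 2))
    (M : Matrix (Fin r) (Fin m) (ZMod 2))
    (A : Matrix (Fin a) (Fin n) (ZMod 2))
    (hker : ∀ s : Fin m → ZMod 2, M.mulVec s = 0 ↔ ∃ e, H.mulVec e = s)
    (t : ℕ) (ht : 0 < t) (f : ℕ → ℝ) (hf : Monotone f)
    (hsound : Sound t f H A)
    (e : Fin n → ZMod 2) (se : Fin m → ZMod 2)
    (hse : 2 * hammingNorm se ≤ t)
    (shat : Fin m → ZMod 2)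
    (hshat : M.mulVec (H.mulVec e + se + shat) = 0)
    (hshat_min : ∀ s' : Fin m → ZMod 2,
      M.mulVec (H.mulVec e + se + s') = 0 → hammingNorm shat ≤ hammingNorm s') :
    (∃ e', H.mulVec e' = se + shat) ∧
    (∃ ehat, H.mulVec ehat = H.mulVec e + se + shat ∧
      (redW A (e + ehat) : ℝ) ≤ f (2 * hammingNorm se)) ∧
    ((∀ x : ℕ, f x = (x : ℝ) ^ 3 / 4) →
      ∃ ehat, H.mulVec ehat = H.mulVec e + se + shat ∧
        (redW A (e + ehat) : ℝ) ≤ 2 * (hammingNorm se : ℝ) ^ 3) := by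
  -- abbreviation
  set s := H.mulVec e with hs
  -- shat has weight ≤ |se|
  have hMs : M.mulVec s = 0 := (hker s).mpr ⟨e, rfl⟩
  have hsese : s + se + se = s := by
    funext i; simp [add_assoc, CharTwo.add_self_eq_zero]
  have hmin : hammingNorm shat ≤ hammingNorm se := by
    apply hshat_min; rw [hsese]; exact hMs
  -- triangle inequality
  have htri : hammingNorm (se + shat) ≤ 2 * hammingNorm se := by
    have hx : (-se) = se := by funext i; exact CharTwo.neg_eq _
    have hy : (-shat) = shat := by funext i; exact CharTwo.neg_eq _
    have := hammingDist_triangle (se + shat) shat (0 : Fin m → ZMod 2)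
    have h2 : hammingNorm (se + shat) ≤ hammingNorm se + hammingNorm shat := by
      rw [add_comm se shat]
      have hz : shat + (se + shat) = se := by
        funext i
        have hw : ∀ x y : ZMod 2, x + (y + x) = y := by decide
        simpa using hw (shat i) (se i)
      simpa [hammingDist_zero_right, hammingDist_comm (se + shat) shat, hx, hy, hz,
        hammingDist_eq_hammingNorm] using this
    omega
  -- se + shat is in the column space
  have himg : ∃ e', H.mulVec e' = se + shat := by
    obtain ⟨e', he'⟩ := (hker _).mp hshat
    refine ⟨e' + e, ?_⟩
    have : H.mulVec (e' + e) = (s + se + shat) + s := by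
      rw [Matrix.mulVec_add, he', hs]
    rw [this]; funext i
    have hz : ∀ x y z : ZMod 2, x + y + z + x = y + z := by decide
    simpa using hz (s i) (se i) (shat i)
  refine ⟨himg, ?_, ?_⟩
  · obtain ⟨e0, he0, hw0⟩ := hsound (se + shat) himg (le_trans htri hse)
    refine ⟨e + e0, ?_, ?_⟩
    · rw [Matrix.mulVec_add, he0, hs, add_assoc]
    · have hee : e + (e + e0) = e0 := by
        funext i
        have hz : ∀ x y : ZMod 2, x + (x + y) = y := by decide
        simpa using hz (e i) (e0 i)
      rw [hee]
      exact le_trans hw0 (hf htri)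
  · intro hfx
    obtain ⟨e0, he0, hw0⟩ := hsound (se + shat) himg (le_trans htri hse)
    refine ⟨e + e0, ?_, ?_⟩
    · rw [Matrix.mulVec_add, he0, hs, add_assoc]
    · have hee : e + (e + e0) = e0 := by
        funext i
        have hz : ∀ x y : ZMod 2, x + (x + y) = y := by decide
        simpa using hz (e i) (e0 i)
      rw [hee]
      have h1 : (redW A e0 : ℝ) ≤ f (2 * hammingNorm se) := le_trans hw0 (hf htri)
      have h2 : f (2 * hammingNorm se) = 2 * (hammingNorm se : ℝ) ^ 3 := by
        rw [hfx]; push_cast; ring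
      linarith
end

section
/- Boundary restriction does not increase reduced weight: Let H_X ∈ 𝔽₂^{m_X×n}, H_Z ∈ 𝔽₂^{m_Z×n}, and ℓ ≥ 2, and form the thickened matrix H̃_X. For every ṽ ∈ 𝔽₂^{nℓ+m_X(ℓ−1)}, its boundary restriction v := ṽ^{(1)} ∈ 𝔽₂ⁿ satisfies ‖v‖_{H_X} ≤ ‖ṽ‖_{H̃_X}. -/
open Matrix Kronecker

private lemma hammingNorm_comp_le {α β : Type*} [Fintype α] [Fintype β]
    [DecidableEq α] [DecidableEq β] (f : α → β) (hf : Function.Injective f)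
    (w : β → ZMod 2) : hammingNorm (fun a => w (f a)) ≤ hammingNorm w := by
  classical
  unfold hammingNorm
  apply Finset.card_le_card_of_injOn f
  · intro a ha
    simp only [Finset.coe_filter, Finset.mem_filter, Finset.mem_univ, true_and, Set.mem_setOf_eq] at ha ⊢
    exact ha
  · exact fun a _ b _ h => hf h

theorem boundary_restriction_redW
    {mX mZ n : ℕ}
    (HX : Matrix (Fin mX) (Fin n) (ZMod 2))
    (HZ : Matrix (Fin mZ) (Fin n) (ZMod 2))
    (ℓ : ℕ) (hℓ : 2 ≤ ℓ)
    (v : (Fin n × Fin ℓ) ⊕ (Fin mX × Fin (ℓ - 1)) → ZMod 2) :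
    redW HX (sheet (⟨0, by omega⟩ : Fin ℓ) v) ≤ redW (thickHX HX ℓ) v := by
  classical
  set τ0 : Fin ℓ := ⟨0, by omega⟩
  set f : Fin n → (Fin n × Fin ℓ) ⊕ (Fin mX × Fin (ℓ - 1)) := fun i => Sum.inl (i, τ0)
  have hf : Function.Injective f := by
    intro a b h
    simpa [f] using h
  set L : ((Fin n × Fin ℓ) ⊕ (Fin mX × Fin (ℓ - 1)) → ZMod 2) →ₗ[ZMod 2]
      (Fin n → ZMod 2) := LinearMap.funLeft (ZMod 2) (ZMod 2) f
  have hne : {k | ∃ u ∈ rowSpace (thickHX HX ℓ), hammingNorm (v + u) = k}.Nonempty :=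
    ⟨hammingNorm v, 0, Submodule.zero_mem _, by simp⟩
  obtain ⟨u, hu, heq⟩ := Nat.sInf_mem hne
  have hrw : redW (thickHX HX ℓ) v = hammingNorm (v + u) := heq.symm
  rw [hrw]
  have hmap : ∀ w ∈ rowSpace (thickHX HX ℓ), L w ∈ rowSpace HX := by
    intro w hw
    have : Submodule.map L (rowSpace (thickHX HX ℓ)) ≤ rowSpace HX := by
      rw [rowSpace, Submodule.map_span, Submodule.span_le]
      rintro x ⟨r, ⟨⟨j, τ⟩, rfl⟩, rfl⟩
      by_cases hτ : τ = τ0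
      · have : L (thickHX HX ℓ (j, τ)) = HX j := by
          funext i
          simp [L, LinearMap.funLeft, f, thickHX, Matrix.fromCols,
            Matrix.kroneckerMap_apply, Matrix.one_apply, hτ]
        rw [this]
        exact Submodule.subset_span ⟨j, rfl⟩
      · have : L (thickHX HX ℓ (j, τ)) = 0 := by
          funext i
          simp [L, LinearMap.funLeft, f, thickHX, Matrix.fromCols,
            Matrix.kroneckerMap_apply, Matrix.one_apply, hτ]
        rw [this]
        exact Submodule.zero_mem _
    exact this ⟨w, hw, rfl⟩
  calc redW HX (sheet τ0 v) ≤ hammingNorm (sheet τ0 v + L u) :=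
        Nat.sInf_le ⟨L u, hmap u hu, rfl⟩
    _ ≤ hammingNorm (v + u) := by
        have : (sheet τ0 v + L u) = fun i => (v + u) (f i) := by
          funext i
          simp [sheet, L, LinearMap.funLeft, f]
        rw [this]
        exact hammingNorm_comp_le f hf _
end

section
/- Correctness of the error-free dimensional-collapse correction (Algorithm 1 with no external errors): Let H_X ∈ 𝔽₂^{m_X×n}, H_Z ∈ 𝔽₂^{m_Z×n}, and ℓ ≥ 2, and form the thickened matrix H̃_Z with the length-ℓ repetition code. Then every v ∈ rs(H̃_Z) satisfies Σ_{τ=1}^{ℓ} v^{(τ)} ∈ rs(H_Z). (Consequently, pushing the sheet components of any Z-stabilizer element of the thickened code onto the boundary sheet yields a Z-stabilizer element of the original code.) -/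
open Matrix Kronecker

theorem collapse_correction_error_free
    {mX mZ n : ℕ}
    (HX : Matrix (Fin mX) (Fin n) (ZMod 2))
    (HZ : Matrix (Fin mZ) (Fin n) (ZMod 2))
    (ℓ : ℕ) (hℓ : 2 ≤ ℓ) :
    ∀ v ∈ rowSpace (thickHZ HX HZ ℓ),
      (∑ τ : Fin ℓ, sheet (n := n) (mX := mX) τ v) ∈ rowSpace HZ := by
  intro v hv
  induction hv using Submodule.span_induction with
  | mem x hx =>
    obtain ⟨r, rfl⟩ := hx
    cases r with
    | inl p =>
      obtain ⟨r, σ⟩ := p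
      have h1 : (∑ τ : Fin ℓ, sheet (n := n) (mX := mX) τ
          (thickHZ HX HZ ℓ (Sum.inl (r, σ)))) = HZ r := by
        funext i
        simp only [sheet, thickHZ, Finset.sum_apply, Matrix.fromBlocks_apply₁₁,
          Matrix.kroneckerMap_apply, Matrix.one_apply]
        simp [mul_ite, Finset.sum_ite_eq]
      rw [h1]
      exact Submodule.subset_span ⟨r, rfl⟩
    | inr p =>
      obtain ⟨j, k⟩ := p
      have h1 : (∑ τ : Fin ℓ, sheet (n := n) (mX := mX) τ
          (thickHZ HX HZ ℓ (Sum.inr (j, k)))) = 0 := by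
        funext i
        simp only [sheet, thickHZ, Finset.sum_apply, Matrix.fromBlocks_apply₂₁,
          Matrix.kroneckerMap_apply, Matrix.one_apply, repH, Matrix.of_apply, Pi.zero_apply]
        have hk1 : k.val < ℓ := by omega
        have hk2 : k.val + 1 < ℓ := by omega
        have hs : (∑ τ : Fin ℓ, (if τ.val = k.val ∨ τ.val = k.val + 1
            then (1 : ZMod 2) else 0)) = 0 := by
          have : ∀ τ : Fin ℓ, (if τ.val = k.val ∨ τ.val = k.val + 1
              then (1 : ZMod 2) else 0)
              = (if τ = ⟨k.val, hk1⟩ then (1 : ZMod 2) else 0)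
                + (if τ = ⟨k.val + 1, hk2⟩ then (1 : ZMod 2) else 0) := by
            intro τ
            rcases τ with ⟨t, ht⟩
            by_cases h1 : t = k.val <;> by_cases h2 : t = k.val + 1 <;>
              simp [Fin.ext_iff, h1, h2]
          rw [Finset.sum_congr rfl (fun τ _ => this τ), Finset.sum_add_distrib]
          simp [Finset.sum_ite_eq']
          decide
        rcases eq_or_ne j i with hji | hji
        · simpa [hji] using hs
        · simp [hji]
      rw [h1]
      exact Submodule.zero_mem _
  | zero =>
    have : (∑ τ : Fin ℓ, sheet (n := n) (mX := mX) τ (0 : _)) = 0 := by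
      funext i; simp [sheet]
    rw [this]; exact Submodule.zero_mem _
  | add x y _ _ hx hy =>
    have : (∑ τ : Fin ℓ, sheet (n := n) (mX := mX) τ (x + y))
        = (∑ τ : Fin ℓ, sheet (n := n) (mX := mX) τ x)
          + (∑ τ : Fin ℓ, sheet (n := n) (mX := mX) τ y) := by
      funext i; simp [sheet, Finset.sum_add_distrib]
    rw [this]; exact Submodule.add_mem _ hx hy
  | smul c x _ hx =>
    have : (∑ τ : Fin ℓ, sheet (n := n) (mX := mX) τ (c • x))
        = c • (∑ τ : Fin ℓ, sheet (n := n) (mX := mX) τ x) := by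
      funext i; simp [sheet, Finset.mul_sum]
    rw [this]; exact Submodule.smul_mem _ c hx
end

section
/- CSS orthogonality of the thickened code: Let H_X ∈ 𝔽₂^{m_X×n} and H_Z ∈ 𝔽₂^{m_Z×n} satisfy H_X·H_Zᵀ = 0, and let ℓ ≥ 2. Then the thickened check matrices satisfy H̃_X·H̃_Zᵀ = 0. -/
open Matrix Kronecker

theorem thick_css_orthogonality
    {mX mZ n : ℕ}
    (HX : Matrix (Fin mX) (Fin n) (ZMod 2))
    (HZ : Matrix (Fin mZ) (Fin n) (ZMod 2))
    (hCSS : HX * HZᵀ = 0)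
    (ℓ : ℕ) (hℓ : 2 ≤ ℓ) :
    thickHX HX ℓ * (thickHZ HX HZ ℓ)ᵀ = 0 := by
  unfold thickHX thickHZ
  rw [fromBlocks_transpose, fromCols_mul_fromBlocks]
  have hr := (repH ℓ)
  have h1 : (HX ⊗ₖ (1 : Matrix (Fin ℓ) (Fin ℓ) (ZMod 2))) *
      (HZ ⊗ₖ (1 : Matrix (Fin ℓ) (Fin ℓ) (ZMod 2)))ᵀ = 0 := by
    rw [show (HZ ⊗ₖ (1 : Matrix (Fin ℓ) (Fin ℓ) (ZMod 2)))ᵀ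
        = HZᵀ ⊗ₖ (1 : Matrix (Fin ℓ) (Fin ℓ) (ZMod 2))ᵀ from
        (Matrix.kroneckerMap_transpose _ _ _).symm,
      Matrix.transpose_one, ← Matrix.mul_kronecker_mul, hCSS, Matrix.zero_kronecker]
  have h2 : (HX ⊗ₖ (1 : Matrix (Fin ℓ) (Fin ℓ) (ZMod 2))) *
        ((1 : Matrix (Fin n) (Fin n) (ZMod 2)) ⊗ₖ repH ℓ)ᵀ +
      ((1 : Matrix (Fin mX) (Fin mX) (ZMod 2)) ⊗ₖ (repH ℓ)ᵀ) *
        (HXᵀ ⊗ₖ (1 : Matrix (Fin (ℓ - 1)) (Fin (ℓ - 1)) (ZMod 2)))ᵀ = 0 := by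
    rw [show ((1 : Matrix (Fin n) (Fin n) (ZMod 2)) ⊗ₖ repH ℓ)ᵀ
        = (1 : Matrix (Fin n) (Fin n) (ZMod 2))ᵀ ⊗ₖ (repH ℓ)ᵀ from
        (Matrix.kroneckerMap_transpose _ _ _).symm,
      show (HXᵀ ⊗ₖ (1 : Matrix (Fin (ℓ - 1)) (Fin (ℓ - 1)) (ZMod 2)))ᵀ
        = HXᵀᵀ ⊗ₖ (1 : Matrix (Fin (ℓ - 1)) (Fin (ℓ - 1)) (ZMod 2))ᵀ from
        (Matrix.kroneckerMap_transpose _ _ _).symm,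
      Matrix.transpose_one, Matrix.transpose_transpose,
      ← Matrix.mul_kronecker_mul, ← Matrix.mul_kronecker_mul]
    simp only [Matrix.transpose_one, Matrix.one_mul, Matrix.mul_one]
    ext i j
    exact CharTwo.add_self_eq_zero ((HX ⊗ₖ (repH ℓ)ᵀ) i j)
  rw [Matrix.transpose_zero, Matrix.mul_zero, add_zero, h1, h2]
  ext i (j | j) <;> simp [Matrix.fromCols]
end

section
/- Metacheck condition of the thickened code: Let H_X ∈ 𝔽₂^{m_X×n} and H_Z ∈ 𝔽₂^{m_Z×n} satisfy H_Z·H_Xᵀ = 0, and let ℓ ≥ 2. Then the metacheck matrix annihilates the thickened Z-check matrix: M̃_Z·H̃_Z = 0. -/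
open Matrix Kronecker

theorem thick_metacheck_condition
    {mX mZ n : ℕ}
    (HX : Matrix (Fin mX) (Fin n) (ZMod 2))
    (HZ : Matrix (Fin mZ) (Fin n) (ZMod 2))
    (hCSS : HZ * HXᵀ = 0)
    (ℓ : ℕ) (hℓ : 2 ≤ ℓ) :
    metaMZ HZ ℓ * thickHZ HX HZ ℓ = 0 := by
  rw [metaMZ, thickHZ, Matrix.fromCols_mul_fromBlocks]
  simp only [← Matrix.mul_kronecker_mul, Matrix.mul_zero, zero_add,
    Matrix.one_mul, Matrix.mul_one, hCSS, Matrix.zero_kronecker]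
  have : HZ ⊗ₖ repH ℓ + HZ ⊗ₖ repH ℓ = 0 := by
    rw [← Matrix.add_kronecker]
    ext i j
    simp [CharTwo.add_self_eq_zero]
  rw [this, Matrix.fromCols_zero]
end

section
/- Logical generators of the thickened code commute with its checks: Let H_X ∈ 𝔽₂^{m_X×n}, H_Z ∈ 𝔽₂^{m_Z×n}, ℓ ≥ 2, and let G_Z ∈ 𝔽₂^{k_Z×n}, G_X ∈ 𝔽₂^{k_X×n}, and g ∈ 𝔽₂^{k_g×ℓ} satisfy H_X·G_Zᵀ = 0, H_Z·G_Xᵀ = 0, and h·gᵀ = 0. Let u ∈ 𝔽₂^{1×ℓ} be the row vector with u₁ = 1 and all other entries 0, and define G̃_Z = ( G_Z⊗u | 0 ) and G̃_X = ( G_X⊗g | 0 ), where the zero blocks occupy the last m_X(ℓ−1) columns. Then H̃_X·G̃_Zᵀ = 0 and H̃_Z·G̃_Xᵀ = 0. -/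
open Matrix Kronecker

theorem thick_logical_generators_commute
    {mX mZ n kZ kX kg : ℕ} (ℓ : ℕ) (hℓ : 2 ≤ ℓ)
    (HX : Matrix (Fin mX) (Fin n) (ZMod 2))
    (HZ : Matrix (Fin mZ) (Fin n) (ZMod 2))
    (GZ : Matrix (Fin kZ) (Fin n) (ZMod 2))
    (GX : Matrix (Fin kX) (Fin n) (ZMod 2))
    (g : Matrix (Fin kg) (Fin ℓ) (ZMod 2))
    (h1 : HX * GZᵀ = 0) (h2 : HZ * GXᵀ = 0) (h3 : repH ℓ * gᵀ = 0)
    (u : Matrix (Fin 1) (Fin ℓ) (ZMod 2))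
    (hu : u = Matrix.of fun _ i => if i.val = 0 then 1 else 0)
    (GZthick : Matrix (Fin kZ × Fin 1)
      ((Fin n × Fin ℓ) ⊕ (Fin mX × Fin (ℓ - 1))) (ZMod 2))
    (hGZthick : GZthick = Matrix.fromCols (GZ ⊗ₖ u) 0)
    (GXthick : Matrix (Fin kX × Fin kg)
      ((Fin n × Fin ℓ) ⊕ (Fin mX × Fin (ℓ - 1))) (ZMod 2))
    (hGXthick : GXthick = Matrix.fromCols (GX ⊗ₖ g) 0) :
    thickHX HX ℓ * GZthickᵀ = 0 ∧ thickHZ HX HZ ℓ * GXthickᵀ = 0 := by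
  subst hGZthick hGXthick
  constructor
  · rw [thickHX, Matrix.transpose_fromCols, Matrix.fromCols_mul_fromRows,
      Matrix.transpose_zero, Matrix.mul_zero, add_zero,
      ← Matrix.kroneckerMap_transpose, ← Matrix.mul_kronecker_mul, h1,
      Matrix.zero_kronecker]
  · rw [thickHZ, Matrix.transpose_fromCols, Matrix.fromBlocks_mul_fromRows,
      Matrix.transpose_zero, Matrix.mul_zero, Matrix.mul_zero, add_zero, add_zero,
      ← Matrix.kroneckerMap_transpose, ← Matrix.mul_kronecker_mul,
      ← Matrix.mul_kronecker_mul, h2, h3,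
      Matrix.zero_kronecker, Matrix.kronecker_zero, Matrix.fromRows_zero]
end

section
/- Thickening preserves the number of logical qubits (k̃ = k): Let H_X ∈ 𝔽₂^{m_X×n} and H_Z ∈ 𝔽₂^{m_Z×n} satisfy H_X·H_Zᵀ = 0, and let ℓ ≥ 1. Then rs(H̃_X) ⊆ ker H̃_Z, rs(H_X) ⊆ ker H_Z, and the 𝔽₂-dimensions of the quotient spaces agree: dim_{𝔽₂}( ker H̃_Z / rs(H̃_X) ) = dim_{𝔽₂}( ker H_Z / rs(H_X) ). Here ker H denotes the kernel of the linear map v ↦ Hv on column vectors, and a row space is viewed inside the same coordinate space via transposition. -/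
open Matrix Kronecker

namespace ThickAux

open Matrix Kronecker

/-- Inclusion map: copy a vector onto every sheet, zero on the new coordinates. -/
def Tl (n mX ℓ : ℕ) : (Fin n → ZMod 2) →ₗ[ZMod 2]
    ((Fin n × Fin ℓ) ⊕ (Fin mX × Fin (ℓ - 1)) → ZMod 2) where
  toFun w := Sum.elim (fun p => w p.1) 0
  map_add' x y := by funext z; cases z <;> simp
  map_smul' c x := by funext z; cases z <;> simp

lemma char2 (a : ZMod 2) : a + a = 0 := by revert a; decide

lemma telescope (F : ℕ → ZMod 2) (s : ℕ) :
    ∑ j ∈ Finset.range s, (F j + F (j + 1)) = F 0 + F s := by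
  induction s with
  | zero => simp [(char2 (F 0)).symm]
  | succ s ih =>
    rw [Finset.sum_range_succ, ih]
    have : ∀ a b c : ZMod 2, a + b + (b + c) = a + c := by decide
    exact this _ _ _

lemma repH_sum {ℓ : ℕ} (j : Fin (ℓ - 1)) (f : Fin ℓ → ZMod 2)
    (h1 : j.1 < ℓ) (h2 : j.1 + 1 < ℓ) :
    ∑ σ : Fin ℓ, repH ℓ j σ * f σ = f ⟨j.1, h1⟩ + f ⟨j.1 + 1, h2⟩ := by
  have key : ∀ σ : Fin ℓ, repH ℓ j σ * f σ =
      (if σ = ⟨j.1, h1⟩ then f σ else 0) + (if σ = ⟨j.1 + 1, h2⟩ then f σ else 0) := by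
    intro σ
    simp only [repH, Matrix.of_apply, Fin.ext_iff]
    split_ifs <;> simp_all
  rw [Finset.sum_congr rfl fun σ _ => key σ, Finset.sum_add_distrib]
  rw [Finset.sum_ite_eq' Finset.univ, Finset.sum_ite_eq' Finset.univ]
  simp

section Main

variable {mX mZ n : ℕ} (HX : Matrix (Fin mX) (Fin n) (ZMod 2))
  (HZ : Matrix (Fin mZ) (Fin n) (ZMod 2)) (ℓ : ℕ)

lemma thickHX_apply_inl (a : Fin mX) (τ : Fin ℓ) (i : Fin n) (σ : Fin ℓ) :
    thickHX HX ℓ (a, τ) (Sum.inl (i, σ)) = HX a i * (if τ = σ then 1 else 0) := by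
  simp [thickHX, Matrix.fromCols, Matrix.kroneckerMap_apply, Matrix.one_apply]

lemma thickHX_apply_inr (a : Fin mX) (τ : Fin ℓ) (b : Fin mX) (j : Fin (ℓ - 1)) :
    thickHX HX ℓ (a, τ) (Sum.inr (b, j)) = (if a = b then 1 else 0) * repH ℓ j τ := by
  simp [thickHX, Matrix.fromCols, Matrix.kroneckerMap_apply, Matrix.one_apply]

lemma thickHZ_mulVec_inl (v : (Fin n × Fin ℓ) ⊕ (Fin mX × Fin (ℓ - 1)) → ZMod 2)
    (c : Fin mZ) (τ : Fin ℓ) :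
    (thickHZ HX HZ ℓ).mulVec v (Sum.inl (c, τ)) =
      ∑ i : Fin n, HZ c i * v (Sum.inl (i, τ)) := by
  rw [Matrix.mulVec]
  simp only [dotProduct, Fintype.sum_sum_type, Fintype.sum_prod_type]
  have h1 : ∀ (i : Fin n) (σ : Fin ℓ),
      thickHZ HX HZ ℓ (Sum.inl (c, τ)) (Sum.inl (i, σ)) * v (Sum.inl (i, σ)) =
      if σ = τ then HZ c i * v (Sum.inl (i, σ)) else 0 := by
    intro i σ
    simp only [thickHZ, Matrix.fromBlocks_apply₁₁, Matrix.kroneckerMap_apply,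
      Matrix.one_apply]
    split_ifs with h h' h'
    · rw [mul_one]
    · exact absurd h.symm h'
    · exact absurd h'.symm h
    · rw [mul_zero, zero_mul]
  have h2 : ∀ (b : Fin mX) (j : Fin (ℓ - 1)),
      thickHZ HX HZ ℓ (Sum.inl (c, τ)) (Sum.inr (b, j)) * v (Sum.inr (b, j)) = 0 := by
    intro b j
    simp [thickHZ]
  simp only [h1, h2, Finset.sum_const_zero, add_zero, Finset.sum_ite_eq' Finset.univ,
    Finset.mem_univ, if_true]

lemma thickHZ_mulVec_inr (v : (Fin n × Fin ℓ) ⊕ (Fin mX × Fin (ℓ - 1)) → ZMod 2)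
    (i : Fin n) (j : Fin (ℓ - 1)) :
    (thickHZ HX HZ ℓ).mulVec v (Sum.inr (i, j)) =
      (∑ σ : Fin ℓ, repH ℓ j σ * v (Sum.inl (i, σ))) +
      ∑ a : Fin mX, HX a i * v (Sum.inr (a, j)) := by
  rw [Matrix.mulVec]
  simp only [dotProduct, Fintype.sum_sum_type, Fintype.sum_prod_type]
  congr 1
  · rw [Finset.sum_comm]
    have h1 : ∀ (σ : Fin ℓ) (i' : Fin n),
        thickHZ HX HZ ℓ (Sum.inr (i, j)) (Sum.inl (i', σ)) * v (Sum.inl (i', σ)) =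
        if i' = i then repH ℓ j σ * v (Sum.inl (i', σ)) else 0 := by
      intro σ i'
      simp only [thickHZ, Matrix.fromBlocks_apply₂₁, Matrix.kroneckerMap_apply,
        Matrix.one_apply]
      split_ifs with h h' h'
      · rw [one_mul]
      · exact absurd h.symm h'
      · exact absurd h'.symm h
      · rw [zero_mul, zero_mul]
    refine Finset.sum_congr rfl fun σ _ => ?_
    simp only [h1, Finset.sum_ite_eq' Finset.univ, Finset.mem_univ, if_true]
  · have h2 : ∀ (a : Fin mX) (j' : Fin (ℓ - 1)),
        thickHZ HX HZ ℓ (Sum.inr (i, j)) (Sum.inr (a, j')) * v (Sum.inr (a, j')) =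
        if j' = j then HX a i * v (Sum.inr (a, j')) else 0 := by
      intro a j'
      simp only [thickHZ, Matrix.fromBlocks_apply₂₂, Matrix.kroneckerMap_apply,
        Matrix.one_apply, Matrix.transpose_apply]
      split_ifs with h h' h'
      · rw [mul_one]
      · exact absurd h.symm h'
      · exact absurd h'.symm h
      · rw [mul_zero, zero_mul]
    refine Finset.sum_congr rfl fun a _ => ?_
    simp only [h2, Finset.sum_ite_eq' Finset.univ, Finset.mem_univ, if_true]

end Main

section Main2

variable {mX mZ n : ℕ} (HX : Matrix (Fin mX) (Fin n) (ZMod 2))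
  (HZ : Matrix (Fin mZ) (Fin n) (ZMod 2)) (ℓ : ℕ)

lemma rowSpace_le_ker {m m' n' : Type*} [Fintype n'] (A : Matrix m n' (ZMod 2))
    (B : Matrix m' n' (ZMod 2)) (h : ∀ p, B.mulVec (A p) = 0) :
    rowSpace A ≤ LinearMap.ker B.mulVecLin := by
  rw [rowSpace, Submodule.span_le]
  rintro _ ⟨p, rfl⟩
  simpa [LinearMap.mem_ker] using h p

lemma mulVec_row (hZX : HZ * HXᵀ = 0) (a : Fin mX) : HZ.mulVec (HX a) = 0 := by
  funext c
  have h0 : (HZ * HXᵀ) c a = 0 := by rw [hZX]; rfl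
  simpa [Matrix.mul_apply, Matrix.mulVec, dotProduct] using h0

lemma thick_row_ker (hZX : HZ * HXᵀ = 0) (p : Fin mX × Fin ℓ) :
    (thickHZ HX HZ ℓ).mulVec (thickHX HX ℓ p) = 0 := by
  obtain ⟨a, τ⟩ := p
  funext r
  rcases r with ⟨c, τ'⟩ | ⟨i, j⟩
  · rw [thickHZ_mulVec_inl]
    by_cases h : τ = τ'
    · have h0 : (HZ * HXᵀ) c a = 0 := by rw [hZX]; rfl
      rw [Matrix.mul_apply] at h0
      simp only [thickHX_apply_inl, h, if_true, mul_one, Pi.zero_apply]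
      simpa [Matrix.transpose_apply] using h0
    · simp [thickHX_apply_inl, h]
  · rw [thickHZ_mulVec_inr]
    have e1 : ∑ σ : Fin ℓ, repH ℓ j σ * thickHX HX ℓ (a, τ) (Sum.inl (i, σ)) =
        repH ℓ j τ * HX a i := by
      simp only [thickHX_apply_inl, mul_ite, mul_one, mul_zero]
      rw [Finset.sum_ite_eq Finset.univ]
      simp
    have e2 : ∑ b : Fin mX, HX b i * thickHX HX ℓ (a, τ) (Sum.inr (b, j)) =
        HX a i * repH ℓ j τ := by
      simp only [thickHX_apply_inr, ite_mul, one_mul, zero_mul, mul_ite, mul_zero]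
      rw [Finset.sum_ite_eq Finset.univ]
      simp
    rw [e1, e2, Pi.zero_apply, mul_comm]
    exact char2 _

lemma sheet_ker (τ : Fin ℓ) (v : (Fin n × Fin ℓ) ⊕ (Fin mX × Fin (ℓ - 1)) → ZMod 2)
    (hv : (thickHZ HX HZ ℓ).mulVec v = 0) :
    HZ.mulVec (fun i => v (Sum.inl (i, τ))) = 0 := by
  funext c
  have h := congrFun hv (Sum.inl (c, τ))
  rw [thickHZ_mulVec_inl] at h
  simpa [Matrix.mulVec, dotProduct] using h

lemma Tl_ker (w : Fin n → ZMod 2) (hw : HZ.mulVec w = 0) :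
    (thickHZ HX HZ ℓ).mulVec (Tl n mX ℓ w) = 0 := by
  funext r
  rcases r with ⟨c, τ⟩ | ⟨i, j⟩
  · rw [thickHZ_mulVec_inl]
    have := congrFun hw c
    simpa [Matrix.mulVec, dotProduct, Tl] using this
  · rw [thickHZ_mulVec_inr]
    have hj1 : j.1 < ℓ := by have := j.2; omega
    have hj2 : j.1 + 1 < ℓ := by have := j.2; omega
    have e1 : ∑ σ : Fin ℓ, repH ℓ j σ * Tl n mX ℓ w (Sum.inl (i, σ)) = 0 := by
      rw [repH_sum j _ hj1 hj2]
      exact char2 _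
    have e2 : ∑ a : Fin mX, HX a i * Tl n mX ℓ w (Sum.inr (a, j)) = 0 := by
      simp [Tl]
    rw [e1, e2, add_zero, Pi.zero_apply]

lemma Tl_row (a : Fin mX) :
    Tl n mX ℓ (HX a) = ∑ τ : Fin ℓ, thickHX HX ℓ (a, τ) := by
  funext x
  rw [Finset.sum_apply]
  rcases x with ⟨i, σ⟩ | ⟨b, j⟩
  · simp only [thickHX_apply_inl, mul_ite, mul_one, mul_zero]
    rw [Finset.sum_ite_eq' Finset.univ]
    simp [Tl]
  · have hj1 : j.1 < ℓ := by have := j.2; omega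
    have hj2 : j.1 + 1 < ℓ := by have := j.2; omega
    have : ∑ τ : Fin ℓ, thickHX HX ℓ (a, τ) (Sum.inr (b, j)) =
        (if a = b then (1 : ZMod 2) else 0) * ∑ τ : Fin ℓ, repH ℓ j τ := by
      rw [Finset.mul_sum]
      exact Finset.sum_congr rfl fun τ _ => thickHX_apply_inr HX ℓ a τ b j
    rw [this]
    have : ∑ τ : Fin ℓ, repH ℓ j τ = 0 := by
      have := repH_sum j (fun _ => (1 : ZMod 2)) hj1 hj2
      simpa using this.trans (char2 1)
    simp [this, Tl]

lemma ker_sheet0_decomp (hℓ : 1 ≤ ℓ)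
    (v : (Fin n × Fin ℓ) ⊕ (Fin mX × Fin (ℓ - 1)) → ZMod 2)
    (hv : (thickHZ HX HZ ℓ).mulVec v = 0) :
    v + Tl n mX ℓ (fun i => v (Sum.inl (i, ⟨0, hℓ⟩))) ∈ rowSpace (thickHX HX ℓ) := by
  classical
  set D : Fin mX → ℕ → ZMod 2 :=
    fun a j => if h : j < ℓ - 1 then v (Sum.inr (a, ⟨j, h⟩)) else 0 with hD
  set c : Fin mX × Fin ℓ → ZMod 2 :=
    fun p => ∑ j ∈ Finset.range p.2.1, D p.1 j with hc
  have key : v + Tl n mX ℓ (fun i => v (Sum.inl (i, ⟨0, hℓ⟩))) =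
      ∑ p : Fin mX × Fin ℓ, c p • thickHX HX ℓ p := by
    funext x
    rw [Pi.add_apply, Finset.sum_apply]
    simp only [Pi.smul_apply, smul_eq_mul]
    rcases x with ⟨i, σ⟩ | ⟨b, j⟩
    · -- inl case
      set F : ℕ → ZMod 2 :=
        fun k => if h : k < ℓ then v (Sum.inl (i, ⟨k, h⟩)) else 0 with hF
      have step : ∀ j ∈ Finset.range σ.1,
          ∑ a : Fin mX, HX a i * D a j = F j + F (j + 1) := by
        intro j hj
        rw [Finset.mem_range] at hj
        have hjl : j < ℓ - 1 := by have := σ.2; omega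
        have hj1 : j < ℓ := by omega
        have hj2 : j + 1 < ℓ := by omega
        have h := congrFun hv (Sum.inr (i, ⟨j, hjl⟩))
        rw [thickHZ_mulVec_inr, Pi.zero_apply] at h
        rw [repH_sum ⟨j, hjl⟩ _ hj1 hj2] at h
        have hD' : ∀ a, D a j = v (Sum.inr (a, ⟨j, hjl⟩)) := by
          intro a; rw [hD]; simp [hjl]
        have hF1 : F j = v (Sum.inl (i, ⟨j, hj1⟩)) := by rw [hF]; simp [hj1]
        have hF2 : F (j + 1) = v (Sum.inl (i, ⟨j + 1, hj2⟩)) := by rw [hF]; simp [hj2]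
        have solve : ∀ x y : ZMod 2, x + y = 0 → y = x := by decide
        have := solve _ _ h
        rw [hF1, hF2]
        rw [Finset.sum_congr rfl fun a _ => congrArg (HX a i * ·) (hD' a)]
        exact this
      have collapse : ∑ p : Fin mX × Fin ℓ, c p * thickHX HX ℓ p (Sum.inl (i, σ)) =
          ∑ a : Fin mX, c (a, σ) * HX a i := by
        rw [Fintype.sum_prod_type]
        refine Finset.sum_congr rfl fun a _ => ?_
        simp only [thickHX_apply_inl, mul_ite, mul_one, mul_zero]
        rw [Finset.sum_ite_eq' Finset.univ]
        simp
      rw [collapse]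
      have swap : ∑ a : Fin mX, c (a, σ) * HX a i =
          ∑ j ∈ Finset.range σ.1, ∑ a : Fin mX, HX a i * D a j := by
        rw [Finset.sum_comm]
        refine Finset.sum_congr rfl fun a _ => ?_
        rw [hc]
        simp only
        rw [Finset.sum_mul]
        exact Finset.sum_congr rfl fun j _ => mul_comm _ _
      have hσ : F σ.1 = v (Sum.inl (i, σ)) := by
        rw [hF]; exact dif_pos σ.2
      have h0 : F 0 = v (Sum.inl (i, ⟨0, hℓ⟩)) := by
        rw [hF]; exact dif_pos hℓ
      rw [swap, Finset.sum_congr rfl step, telescope, hσ, h0]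
      have : Tl n mX ℓ (fun i => v (Sum.inl (i, ⟨0, hℓ⟩))) (Sum.inl (i, σ)) =
          v (Sum.inl (i, ⟨0, hℓ⟩)) := rfl
      rw [this, add_comm]
    · -- inr case
      have hj1 : j.1 < ℓ := by have := j.2; omega
      have hj2 : j.1 + 1 < ℓ := by have := j.2; omega
      have collapse : ∑ p : Fin mX × Fin ℓ, c p * thickHX HX ℓ p (Sum.inr (b, j)) =
          ∑ τ : Fin ℓ, repH ℓ j τ * c (b, τ) := by
        rw [Fintype.sum_prod_type, Finset.sum_comm]
        refine Finset.sum_congr rfl fun τ _ => ?_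
        simp only [thickHX_apply_inr, ite_mul, one_mul, zero_mul, mul_ite, mul_zero]
        rw [Finset.sum_ite_eq' Finset.univ]
        simp [mul_comm]
      rw [collapse, repH_sum j _ hj1 hj2]
      have e1 : c (b, ⟨j.1, hj1⟩) = ∑ k ∈ Finset.range j.1, D b k := rfl
      have e2 : c (b, ⟨j.1 + 1, hj2⟩) = ∑ k ∈ Finset.range j.1, D b k + D b j.1 := by
        rw [hc]; exact Finset.sum_range_succ _ _
      rw [e1, e2]
      have hDb : D b j.1 = v (Sum.inr (b, j)) := by
        rw [hD]; simp only [j.2, dif_pos]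
      have solve : ∀ x y : ZMod 2, x + (x + y) = y := by decide
      rw [solve, hDb]
      have : Tl n mX ℓ (fun i => v (Sum.inl (i, ⟨0, hℓ⟩))) (Sum.inr (b, j)) = 0 := rfl
      rw [this, add_zero]
  rw [key]
  exact Submodule.sum_mem _ fun p _ =>
    Submodule.smul_mem _ _ (Submodule.subset_span ⟨p, rfl⟩)

end Main2

end ThickAux


set_option maxHeartbeats 1000000 in
theorem thickening_preserves_logical_qubits
    {mX mZ n : ℕ}
    (HX : Matrix (Fin mX) (Fin n) (ZMod 2))
    (HZ : Matrix (Fin mZ) (Fin n) (ZMod 2))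
    (hCSS : HX * HZᵀ = 0)
    (ℓ : ℕ) (hℓ : 1 ≤ ℓ) :
    rowSpace (thickHX HX ℓ) ≤ LinearMap.ker (thickHZ HX HZ ℓ).mulVecLin ∧
    rowSpace HX ≤ LinearMap.ker HZ.mulVecLin ∧
    Module.finrank (ZMod 2)
      (↥(LinearMap.ker (thickHZ HX HZ ℓ).mulVecLin) ⧸
        Submodule.comap (LinearMap.ker (thickHZ HX HZ ℓ).mulVecLin).subtype
          (rowSpace (thickHX HX ℓ))) =
    Module.finrank (ZMod 2)
      (↥(LinearMap.ker HZ.mulVecLin) ⧸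
        Submodule.comap (LinearMap.ker HZ.mulVecLin).subtype (rowSpace HX)) := by
  classical
  have hZX : HZ * HXᵀ = 0 := by
    have h := congrArg Matrix.transpose hCSS
    simpa [Matrix.transpose_mul] using h
  have incl2 : rowSpace HX ≤ LinearMap.ker HZ.mulVecLin :=
    ThickAux.rowSpace_le_ker HX HZ fun a => ThickAux.mulVec_row HX HZ hZX a
  have incl1 : rowSpace (thickHX HX ℓ) ≤ LinearMap.ker (thickHZ HX HZ ℓ).mulVecLin :=
    ThickAux.rowSpace_le_ker _ _ fun p => ThickAux.thick_row_ker HX HZ ℓ hZX p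
  refine ⟨incl1, incl2, ?_⟩
  set K : Submodule (ZMod 2) (Fin n → ZMod 2) := LinearMap.ker HZ.mulVecLin with hK
  set K' : Submodule (ZMod 2) ((Fin n × Fin ℓ) ⊕ (Fin mX × Fin (ℓ - 1)) → ZMod 2) :=
    LinearMap.ker (thickHZ HX HZ ℓ).mulVecLin with hK'
  set R : Submodule (ZMod 2) K := Submodule.comap K.subtype (rowSpace HX) with hR
  set R' : Submodule (ZMod 2) K' :=
    Submodule.comap K'.subtype (rowSpace (thickHX HX ℓ)) with hR'
  -- the sheet-0 restriction map
  set Sl : ((Fin n × Fin ℓ) ⊕ (Fin mX × Fin (ℓ - 1)) → ZMod 2) →ₗ[ZMod 2]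
      (Fin n → ZMod 2) :=
    LinearMap.funLeft (ZMod 2) (ZMod 2)
      (fun i : Fin n => Sum.inl (i, (⟨0, hℓ⟩ : Fin ℓ))) with hSl
  have hSlK : ∀ x : K', Sl x.1 ∈ K := by
    intro x
    have hx : (thickHZ HX HZ ℓ).mulVec x.1 = 0 := x.2
    have := ThickAux.sheet_ker HX HZ ℓ ⟨0, hℓ⟩ x.1 hx
    exact this
  have hSlspan : ∀ y ∈ rowSpace (thickHX HX ℓ), Sl y ∈ rowSpace HX := by
    intro y hy
    have : rowSpace (thickHX HX ℓ) ≤ Submodule.comap Sl (rowSpace HX) := by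
      rw [rowSpace, Submodule.span_le]
      rintro _ ⟨⟨a, τ⟩, rfl⟩
      simp only [Submodule.mem_comap, SetLike.mem_coe]
      by_cases h : τ = (⟨0, hℓ⟩ : Fin ℓ)
      · have heq : Sl (thickHX HX ℓ (a, τ)) = HX a := by
          funext i
          simp [hSl, LinearMap.funLeft_apply, ThickAux.thickHX_apply_inl, h]
        rw [heq]
        exact Submodule.subset_span ⟨a, rfl⟩
      · have heq : Sl (thickHX HX ℓ (a, τ)) = 0 := by
          funext i
          simp [hSl, LinearMap.funLeft_apply, ThickAux.thickHX_apply_inl, h]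
        rw [heq]
        exact Submodule.zero_mem _
    exact this hy
  -- the extension map
  set Tl' : (Fin n → ZMod 2) →ₗ[ZMod 2]
      ((Fin n × Fin ℓ) ⊕ (Fin mX × Fin (ℓ - 1)) → ZMod 2) := ThickAux.Tl n mX ℓ with hTl
  have hTlK : ∀ w : K, Tl' w.1 ∈ K' := by
    intro w
    have hw : HZ.mulVec w.1 = 0 := w.2
    have := ThickAux.Tl_ker HX HZ ℓ w.1 hw
    simpa [hK', LinearMap.mem_ker, hTl] using this
  have hTlspan : ∀ y ∈ rowSpace HX, Tl' y ∈ rowSpace (thickHX HX ℓ) := by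
    intro y hy
    have : rowSpace HX ≤ Submodule.comap Tl' (rowSpace (thickHX HX ℓ)) := by
      rw [rowSpace, Submodule.span_le]
      rintro _ ⟨a, rfl⟩
      simp only [Submodule.mem_comap, SetLike.mem_coe, hTl]
      rw [ThickAux.Tl_row HX ℓ a]
      exact Submodule.sum_mem _ fun τ _ => Submodule.subset_span ⟨(a, τ), rfl⟩
    exact this hy
  -- induced maps on kernels
  set F0 : K' →ₗ[ZMod 2] K :=
    (Sl.comp K'.subtype).codRestrict K (fun x => hSlK x) with hF0
  set G0 : K →ₗ[ZMod 2] K' :=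
    (Tl'.comp K.subtype).codRestrict K' (fun w => hTlK w) with hG0
  -- induced maps on quotients
  have hFker : R' ≤ LinearMap.ker (R.mkQ.comp F0) := by
    intro x hx
    have hx' : (x : (Fin n × Fin ℓ) ⊕ (Fin mX × Fin (ℓ - 1)) → ZMod 2) ∈
        rowSpace (thickHX HX ℓ) := hx
    simp only [LinearMap.mem_ker, LinearMap.comp_apply, Submodule.mkQ_apply,
      Submodule.Quotient.mk_eq_zero]
    show F0 x ∈ R
    simp only [hR, Submodule.mem_comap, Submodule.subtype_apply]
    exact hSlspan _ hx'
  have hGker : R ≤ LinearMap.ker (R'.mkQ.comp G0) := by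
    intro w hw
    have hw' : (w : Fin n → ZMod 2) ∈ rowSpace HX := hw
    simp only [LinearMap.mem_ker, LinearMap.comp_apply, Submodule.mkQ_apply,
      Submodule.Quotient.mk_eq_zero]
    show G0 w ∈ R'
    simp only [hR', Submodule.mem_comap, Submodule.subtype_apply]
    exact hTlspan _ hw'
  set Fq : (K' ⧸ R') →ₗ[ZMod 2] (K ⧸ R) := Submodule.liftQ R' (R.mkQ.comp F0) hFker with hFq
  set Gq : (K ⧸ R) →ₗ[ZMod 2] (K' ⧸ R') := Submodule.liftQ R (R'.mkQ.comp G0) hGker with hGq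
  have hFG : Fq.comp Gq = LinearMap.id := by
    apply Submodule.linearMap_qext
    refine LinearMap.ext fun w => ?_
    rw [hFq, hGq]
    simp only [LinearMap.comp_apply, Submodule.mkQ_apply, Submodule.liftQ_apply,
      LinearMap.id_apply]
    congr 1
  have hGF : Gq.comp Fq = LinearMap.id := by
    apply Submodule.linearMap_qext
    refine LinearMap.ext fun v => ?_
    rw [hGq, hFq]
    simp only [LinearMap.comp_apply, Submodule.mkQ_apply, Submodule.liftQ_apply,
      LinearMap.id_apply]
    refine (Submodule.Quotient.eq R').mpr ?_
    show (G0 (F0 v) - v : K') ∈ R'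
    simp only [hR', Submodule.mem_comap, Submodule.subtype_apply, Submodule.coe_sub]
    have hv : (thickHZ HX HZ ℓ).mulVec v.1 = 0 := v.2
    have hdec := ThickAux.ker_sheet0_decomp HX HZ ℓ hℓ v.1 hv
    have heq : ((G0 (F0 v) : _) : (Fin n × Fin ℓ) ⊕ (Fin mX × Fin (ℓ - 1)) → ZMod 2)
        - (v : _) = v.1 + ThickAux.Tl n mX ℓ (fun i => v.1 (Sum.inl (i, ⟨0, hℓ⟩))) := by
      funext x
      have h2 : ∀ a b : ZMod 2, a - b = b + a := by decide
      exact h2 _ _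
    rw [heq]
    exact hdec
  exact LinearEquiv.finrank_eq (LinearEquiv.ofLinear Fq Gq hFG hGF)
end

section
/- Dimension of hypergraph product codes: For all H₁ ∈ 𝔽₂^{m₁×n₁} and H₂ ∈ 𝔽₂^{m₂×n₂}, with r₁ = rank H₁ and r₂ = rank H₂, the HGP code satisfies rs(H_X) ⊆ ker H_Z and dim_{𝔽₂}( ker H_Z / rs(H_X) ) = (n₁−r₁)(n₂−r₂) + (m₁−r₁)(m₂−r₂), i.e. the number of logical qubits is k = k₁k₂ + k₁ᵀk₂ᵀ where kᵢ = nᵢ − rᵢ and kᵢᵀ = mᵢ − rᵢ. -/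
open Matrix Kronecker

/-- HGP X-check matrix `H_X = ( H₁⊗I_{n₂} | I_{m₁}⊗H₂ᵀ )`. -/
def hgpHX {m₁ n₁ m₂ n₂ : ℕ} (H₁ : Matrix (Fin m₁) (Fin n₁) (ZMod 2))
    (H₂ : Matrix (Fin m₂) (Fin n₂) (ZMod 2)) :
    Matrix (Fin m₁ × Fin n₂) ((Fin n₁ × Fin n₂) ⊕ (Fin m₁ × Fin m₂)) (ZMod 2) :=
  Matrix.fromCols (H₁ ⊗ₖ (1 : Matrix (Fin n₂) (Fin n₂) (ZMod 2)))
    ((1 : Matrix (Fin m₁) (Fin m₁) (ZMod 2)) ⊗ₖ H₂ᵀ)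

/-- HGP Z-check matrix `H_Z = ( I_{n₁}⊗H₂ | H₁ᵀ⊗I_{m₂} )`. -/
def hgpHZ {m₁ n₁ m₂ n₂ : ℕ} (H₁ : Matrix (Fin m₁) (Fin n₁) (ZMod 2))
    (H₂ : Matrix (Fin m₂) (Fin n₂) (ZMod 2)) :
    Matrix (Fin n₁ × Fin m₂) ((Fin n₁ × Fin n₂) ⊕ (Fin m₁ × Fin m₂)) (ZMod 2) :=
  Matrix.fromCols ((1 : Matrix (Fin n₁) (Fin n₁) (ZMod 2)) ⊗ₖ H₂)
    (H₁ᵀ ⊗ₖ (1 : Matrix (Fin m₂) (Fin m₂) (ZMod 2)))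



open Module Submodule

section RC

variable {F : Type*} [Field F] {α β : Type*}

/-- Subspace of `α × β → F` whose columns lie in `K` and rows lie in `L`. -/
def rcSpace (K : Submodule F (α → F)) (L : Submodule F (β → F)) :
    Submodule F (α × β → F) where
  carrier := {s | (∀ b, (fun a => s (a, b)) ∈ K) ∧ ∀ a, (fun b => s (a, b)) ∈ L}
  add_mem' := by
    rintro x y ⟨hx1, hx2⟩ ⟨hy1, hy2⟩
    exact ⟨fun b => K.add_mem (hx1 b) (hy1 b), fun a => L.add_mem (hx2 a) (hy2 a)⟩
  zero_mem' := ⟨fun b => K.zero_mem, fun a => L.zero_mem⟩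
  smul_mem' := by
    rintro c x ⟨h1, h2⟩
    exact ⟨fun b => K.smul_mem c (h1 b), fun a => L.smul_mem c (h2 a)⟩

lemma mem_rcSpace {K : Submodule F (α → F)} {L : Submodule F (β → F)} {s : α × β → F} :
    s ∈ rcSpace K L ↔ (∀ b, (fun a => s (a, b)) ∈ K) ∧ ∀ a, (fun b => s (a, b)) ∈ L :=
  Iff.rfl

theorem finrank_rcSpace [Fintype α] [Fintype β] (K : Submodule F (α → F))
    (L : Submodule F (β → F)) :
    finrank F (rcSpace K L) = finrank F K * finrank F L := by
  classical
  set k := finrank F K with hk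
  set l := finrank F L with hl
  let bK : Basis (Fin k) F K := Module.finBasis F K
  let bL : Basis (Fin l) F L := Module.finBasis F L
  set u : Fin k → (α → F) := fun i => (bK i : α → F) with hu_def
  set w : Fin l → (β → F) := fun j => (bL j : β → F) with hw_def
  have hu : LinearIndependent F u := bK.linearIndependent.map' K.subtype K.ker_subtype
  have hw : LinearIndependent F w := bL.linearIndependent.map' L.subtype L.ker_subtype
  let Φ : (Fin k × Fin l → F) →ₗ[F] (α × β → F) :=
    { toFun := fun c p => ∑ i, ∑ j, c (i, j) * (u i p.1 * w j p.2)
      map_add' := by intro c c'; funext p; simp [add_mul, Finset.sum_add_distrib]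
      map_smul' := by intro r c; funext p; simp [Finset.mul_sum, mul_assoc] }
  have hΦ : ∀ (c : Fin k × Fin l → F) p, Φ c p = ∑ i, (∑ j, c (i, j) * w j p.2) * u i p.1 := by
    intro c p
    show (∑ i, ∑ j, c (i, j) * (u i p.1 * w j p.2)) = _
    refine Finset.sum_congr rfl fun i _ => ?_
    rw [Finset.sum_mul]
    exact Finset.sum_congr rfl fun j _ => by ring
  have hΦ' : ∀ (c : Fin k × Fin l → F) p, Φ c p = ∑ j, (∑ i, c (i, j) * u i p.1) * w j p.2 := by
    intro c p
    show (∑ i, ∑ j, c (i, j) * (u i p.1 * w j p.2)) = _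
    rw [Finset.sum_comm]
    refine Finset.sum_congr rfl fun j _ => ?_
    rw [Finset.sum_mul]
    exact Finset.sum_congr rfl fun i _ => by ring
  have hinj : Function.Injective Φ := by
    rw [← LinearMap.ker_eq_bot, LinearMap.ker_eq_bot']
    intro c hc
    have h1 : ∀ b i, (∑ j, c (i, j) * w j b) = 0 := by
      intro b
      refine Fintype.linearIndependent_iff.mp hu (fun i => ∑ j, c (i, j) * w j b) ?_
      funext a
      rw [Finset.sum_apply]
      have h2 : Φ c (a, b) = 0 := by rw [hc]; rfl
      rw [hΦ c (a, b)] at h2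
      simpa [smul_eq_mul] using h2
    funext p
    obtain ⟨i, j⟩ := p
    refine Fintype.linearIndependent_iff.mp hw (fun j => c (i, j)) ?_ j
    funext b
    rw [Finset.sum_apply]
    simpa [smul_eq_mul] using h1 b i
  have hrange : LinearMap.range Φ = rcSpace K L := by
    apply le_antisymm
    · rintro _ ⟨c, rfl⟩
      refine mem_rcSpace.mpr ⟨fun b => ?_, fun a => ?_⟩
      · have he : (fun a => Φ c (a, b)) = ∑ i, (∑ j, c (i, j) * w j b) • u i := by
          funext a
          rw [Finset.sum_apply, hΦ c (a, b)]
          simp [smul_eq_mul]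
        rw [he]
        exact Submodule.sum_mem _ fun i _ => K.smul_mem _ (bK i).2
      · have he : (fun b => Φ c (a, b)) = ∑ j, (∑ i, c (i, j) * u i a) • w j := by
          funext b
          rw [Finset.sum_apply, hΦ' c (a, b)]
          simp [smul_eq_mul]
        rw [he]
        exact Submodule.sum_mem _ fun j _ => L.smul_mem _ (bL j).2
    · rintro s ⟨hcol, hrow⟩
      set d : Fin k → β → F := fun i b => bK.repr ⟨fun a => s (a, b), hcol b⟩ i with hd_def
      have hA : ∀ a b, s (a, b) = ∑ i, d i b * u i a := by
        intro a b
        have h0 := bK.sum_repr ⟨fun a => s (a, b), hcol b⟩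
        have h : (↑(∑ i, bK.repr ⟨fun a => s (a, b), hcol b⟩ i • bK i) : α → F) a = s (a, b) := by
          rw [h0]
        rw [← h]
        rw [AddSubmonoidClass.coe_finset_sum, Finset.sum_apply]
        simp [smul_eq_mul, hd_def, hu_def]
      have hd : ∀ i, d i ∈ L := by
        intro i
        obtain ⟨ψ, hψ⟩ := LinearMap.exists_extend (bK.coord i)
        have hψ' : ∀ v : K, ψ (v : α → F) = bK.repr v i := fun v => LinearMap.congr_fun hψ v
        have key : d i = ∑ a, ψ (fun a' => if a = a' then 1 else 0) • (fun b => s (a, b)) := by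
          funext b
          rw [Finset.sum_apply]
          have h2 := LinearMap.pi_apply_eq_sum_univ ψ (fun a => s (a, b))
          have h3 : d i b = ψ (fun a => s (a, b)) := (hψ' ⟨fun a => s (a, b), hcol b⟩).symm
          rw [h3, h2]
          simp [smul_eq_mul, mul_comm]
        rw [key]
        exact Submodule.sum_mem _ fun a _ => L.smul_mem _ (hrow a)
      set e : Fin k × Fin l → F := fun p => bL.repr ⟨d p.1, hd p.1⟩ p.2 with he_def
      have hB : ∀ i b, d i b = ∑ j, e (i, j) * w j b := by
        intro i b
        have h0 := bL.sum_repr ⟨d i, hd i⟩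
        have h : (↑(∑ j, bL.repr ⟨d i, hd i⟩ j • bL j) : β → F) b = d i b := by
          rw [h0]
        rw [← h]
        rw [AddSubmonoidClass.coe_finset_sum, Finset.sum_apply]
        simp [smul_eq_mul, he_def, hw_def]
      refine ⟨e, ?_⟩
      funext p
      obtain ⟨a, b⟩ := p
      rw [hΦ e (a, b)]
      calc ∑ i, (∑ j, e (i, j) * w j b) * u i a
          = ∑ i, d i b * u i a := by
            refine Finset.sum_congr rfl fun i _ => ?_
            rw [← hB i b]
        _ = s (a, b) := (hA a b).symm
  have hfr : finrank F (rcSpace K L) = finrank F (Fin k × Fin l → F) := by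
    rw [← hrange, LinearMap.finrank_range_of_inj hinj]
  rw [hfr, Module.finrank_pi, Fintype.card_prod, Fintype.card_fin, Fintype.card_fin]

lemma rcSpace_inf (K : Submodule F (α → F)) (L : Submodule F (β → F)) :
    rcSpace K (⊤ : Submodule F (β → F)) ⊓ rcSpace (⊤ : Submodule F (α → F)) L
      = rcSpace K L := by
  ext s
  simp [mem_rcSpace, Submodule.mem_inf]

end RC

section KR

variable {F : Type*} [Field F]

lemma range_fromColumns_mulVecLin {m n₁ n₂ : Type*} [Fintype n₁] [Fintype n₂] [Fintype m]
    (A : Matrix m n₁ F) (B : Matrix m n₂ F) :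
    LinearMap.range (Matrix.fromCols A B).mulVecLin
      = LinearMap.range A.mulVecLin ⊔ LinearMap.range B.mulVecLin := by
  apply le_antisymm
  · rintro _ ⟨v, rfl⟩
    have hv : v = Sum.elim (fun i => v (Sum.inl i)) (fun j => v (Sum.inr j)) := by
      funext x; cases x <;> rfl
    rw [Matrix.mulVecLin_apply, hv, Matrix.fromCols_mulVec_sumElim]
    exact Submodule.add_mem_sup ⟨_, rfl⟩ ⟨_, rfl⟩
  · rw [sup_le_iff]
    constructor
    · rintro _ ⟨x, rfl⟩
      exact ⟨Sum.elim x 0, by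
        rw [Matrix.mulVecLin_apply, Matrix.fromCols_mulVec_sumElim]; simp⟩
    · rintro _ ⟨y, rfl⟩
      exact ⟨Sum.elim 0 y, by
        rw [Matrix.mulVecLin_apply, Matrix.fromCols_mulVec_sumElim]; simp⟩

lemma kroneckerOne_mulVec {m n q : ℕ} (A : Matrix (Fin m) (Fin n) F)
    (v : Fin n × Fin q → F) (p : Fin m × Fin q) :
    ((A ⊗ₖ (1 : Matrix (Fin q) (Fin q) F)) *ᵥ v) p = (A *ᵥ fun i => v (i, p.2)) p.1 := by
  obtain ⟨a, b⟩ := p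
  simp [Matrix.mulVec, dotProduct, Fintype.sum_prod_type, Matrix.one_apply,
    mul_ite, ite_mul, Finset.mul_sum]

lemma oneKronecker_mulVec {m n q : ℕ} (B : Matrix (Fin m) (Fin n) F)
    (v : Fin q × Fin n → F) (p : Fin q × Fin m) :
    (((1 : Matrix (Fin q) (Fin q) F) ⊗ₖ B) *ᵥ v) p = (B *ᵥ fun j => v (p.1, j)) p.2 := by
  obtain ⟨a, b⟩ := p
  simp [Matrix.mulVec, dotProduct, Fintype.sum_prod_type, Matrix.one_apply,
    mul_ite, ite_mul, Finset.mul_sum]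

lemma range_kroneckerOne {m n q : ℕ} (A : Matrix (Fin m) (Fin n) F) :
    LinearMap.range (A ⊗ₖ (1 : Matrix (Fin q) (Fin q) F)).mulVecLin
      = rcSpace (LinearMap.range A.mulVecLin) (⊤ : Submodule F (Fin q → F)) := by
  apply le_antisymm
  · rintro _ ⟨v, rfl⟩
    refine mem_rcSpace.mpr ⟨fun b => ⟨fun i => v (i, b), ?_⟩, fun a => trivial⟩
    funext a
    rw [Matrix.mulVecLin_apply, Matrix.mulVecLin_apply]
    exact (kroneckerOne_mulVec A v (a, b)).symm
  · rintro s hs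
    obtain ⟨hcol, -⟩ := mem_rcSpace.mp hs
    choose x hx using fun b => LinearMap.mem_range.mp (hcol b)
    refine ⟨fun p => x p.2 p.1, ?_⟩
    funext p
    obtain ⟨a, b⟩ := p
    rw [Matrix.mulVecLin_apply, kroneckerOne_mulVec]
    exact congrFun (hx b) a

lemma range_oneKronecker {m n q : ℕ} (B : Matrix (Fin m) (Fin n) F) :
    LinearMap.range ((1 : Matrix (Fin q) (Fin q) F) ⊗ₖ B).mulVecLin
      = rcSpace (⊤ : Submodule F (Fin q → F)) (LinearMap.range B.mulVecLin) := by
  apply le_antisymm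
  · rintro _ ⟨v, rfl⟩
    refine mem_rcSpace.mpr ⟨fun b => trivial, fun a => ⟨fun j => v (a, j), ?_⟩⟩
    funext b
    rw [Matrix.mulVecLin_apply, Matrix.mulVecLin_apply]
    exact (oneKronecker_mulVec B v (a, b)).symm
  · rintro s hs
    obtain ⟨-, hrow⟩ := mem_rcSpace.mp hs
    choose x hx using fun a => LinearMap.mem_range.mp (hrow a)
    refine ⟨fun p => x p.1 p.2, ?_⟩
    funext p
    obtain ⟨a, b⟩ := p
    rw [Matrix.mulVecLin_apply, oneKronecker_mulVec]
    exact congrFun (hx a) b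

lemma finrank_top_pi {q : ℕ} : finrank F (⊤ : Submodule F (Fin q → F)) = q := by
  rw [finrank_top, Module.finrank_pi, Fintype.card_fin]

end KR

section HGPrank

lemma rank_hgpHX_eq {m₁ n₁ m₂ n₂ : ℕ} (H₁ : Matrix (Fin m₁) (Fin n₁) (ZMod 2))
    (H₂ : Matrix (Fin m₂) (Fin n₂) (ZMod 2)) :
    (hgpHX H₁ H₂).rank + H₁.rank * H₂.rank = H₁.rank * n₂ + m₁ * H₂.rank := by
  have hdef : (hgpHX H₁ H₂).rank
      = finrank (ZMod 2) (LinearMap.range (hgpHX H₁ H₂).mulVecLin) := rfl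
  have hr1 : finrank (ZMod 2) (LinearMap.range H₁.mulVecLin) = H₁.rank := rfl
  have hr2 : finrank (ZMod 2) (LinearMap.range H₂ᵀ.mulVecLin) = H₂.rank := by
    rw [← Matrix.rank_transpose H₂]; rfl
  have hsup := Submodule.finrank_sup_add_finrank_inf_eq
    (rcSpace (LinearMap.range H₁.mulVecLin) (⊤ : Submodule (ZMod 2) (Fin n₂ → ZMod 2)))
    (rcSpace (⊤ : Submodule (ZMod 2) (Fin m₁ → ZMod 2)) (LinearMap.range H₂ᵀ.mulVecLin))
  rw [rcSpace_inf, finrank_rcSpace, finrank_rcSpace, finrank_rcSpace,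
    finrank_top_pi, finrank_top_pi, hr1, hr2] at hsup
  rw [hdef, hgpHX, range_fromColumns_mulVecLin, range_kroneckerOne, range_oneKronecker]
  exact hsup

lemma rank_hgpHZ_eq {m₁ n₁ m₂ n₂ : ℕ} (H₁ : Matrix (Fin m₁) (Fin n₁) (ZMod 2))
    (H₂ : Matrix (Fin m₂) (Fin n₂) (ZMod 2)) :
    (hgpHZ H₁ H₂).rank + H₁.rank * H₂.rank = n₁ * H₂.rank + H₁.rank * m₂ := by
  have hdef : (hgpHZ H₁ H₂).rank
      = finrank (ZMod 2) (LinearMap.range (hgpHZ H₁ H₂).mulVecLin) := rfl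
  have hr1 : finrank (ZMod 2) (LinearMap.range H₁ᵀ.mulVecLin) = H₁.rank := by
    rw [← Matrix.rank_transpose H₁]; rfl
  have hr2 : finrank (ZMod 2) (LinearMap.range H₂.mulVecLin) = H₂.rank := rfl
  have hsup := Submodule.finrank_sup_add_finrank_inf_eq
    (rcSpace (⊤ : Submodule (ZMod 2) (Fin n₁ → ZMod 2)) (LinearMap.range H₂.mulVecLin))
    (rcSpace (LinearMap.range H₁ᵀ.mulVecLin) (⊤ : Submodule (ZMod 2) (Fin m₂ → ZMod 2)))
  rw [inf_comm, rcSpace_inf, finrank_rcSpace, finrank_rcSpace, finrank_rcSpace,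
    finrank_top_pi, finrank_top_pi, hr1, hr2] at hsup
  rw [hdef, hgpHZ, range_fromColumns_mulVecLin, range_oneKronecker, range_kroneckerOne]
  exact hsup

lemma hgp_orth {m₁ n₁ m₂ n₂ : ℕ} (H₁ : Matrix (Fin m₁) (Fin n₁) (ZMod 2))
    (H₂ : Matrix (Fin m₂) (Fin n₂) (ZMod 2)) :
    hgpHZ H₁ H₂ * (hgpHX H₁ H₂)ᵀ = 0 := by
  rw [hgpHX, hgpHZ, Matrix.transpose_fromCols, Matrix.fromCols_mul_fromRows,
    ← Matrix.kroneckerMap_transpose, ← Matrix.kroneckerMap_transpose,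
    Matrix.transpose_one, Matrix.transpose_one, Matrix.transpose_transpose,
    ← Matrix.mul_kronecker_mul, ← Matrix.mul_kronecker_mul]
  rw [Matrix.one_mul, Matrix.mul_one, Matrix.one_mul, Matrix.mul_one]
  ext i j
  simp only [Matrix.add_apply, Matrix.zero_apply]
  exact CharTwo.add_self_eq_zero _

lemma rowSpace_eq_range {m n : Type*} [Fintype m] (A : Matrix m n (ZMod 2)) :
    rowSpace A = LinearMap.range Aᵀ.mulVecLin := by
  rw [Matrix.range_mulVecLin]; rfl

end HGPrank

set_option synthInstance.maxHeartbeats 1000000 in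
set_option maxHeartbeats 1000000 in
theorem hgp_dimension
    {m₁ n₁ m₂ n₂ : ℕ}
    (H₁ : Matrix (Fin m₁) (Fin n₁) (ZMod 2))
    (H₂ : Matrix (Fin m₂) (Fin n₂) (ZMod 2)) :
    rowSpace (hgpHX H₁ H₂) ≤ LinearMap.ker (hgpHZ H₁ H₂).mulVecLin ∧
    Module.finrank (ZMod 2)
      (↥(LinearMap.ker (hgpHZ H₁ H₂).mulVecLin) ⧸
        Submodule.comap (LinearMap.ker (hgpHZ H₁ H₂).mulVecLin).subtype
          (rowSpace (hgpHX H₁ H₂))) =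
    (n₁ - H₁.rank) * (n₂ - H₂.rank) + (m₁ - H₁.rank) * (m₂ - H₂.rank) := by
  classical
  have hsub : rowSpace (hgpHX H₁ H₂) ≤ LinearMap.ker (hgpHZ H₁ H₂).mulVecLin := by
    rw [rowSpace_eq_range]
    rintro _ ⟨y, rfl⟩
    rw [LinearMap.mem_ker, Matrix.mulVecLin_apply, Matrix.mulVecLin_apply,
      Matrix.mulVec_mulVec, hgp_orth, Matrix.zero_mulVec]
  refine ⟨hsub, ?_⟩
  have h1 := Submodule.finrank_quotient_add_finrank
    (Submodule.comap (LinearMap.ker (hgpHZ H₁ H₂).mulVecLin).subtype (rowSpace (hgpHX H₁ H₂)))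
  have h2 : finrank (ZMod 2)
      (Submodule.comap (LinearMap.ker (hgpHZ H₁ H₂).mulVecLin).subtype (rowSpace (hgpHX H₁ H₂)))
      = finrank (ZMod 2) (rowSpace (hgpHX H₁ H₂)) :=
    (Submodule.comapSubtypeEquivOfLe hsub).finrank_eq
  have h3 : finrank (ZMod 2) (rowSpace (hgpHX H₁ H₂)) = (hgpHX H₁ H₂).rank := by
    rw [rowSpace_eq_range, ← Matrix.rank_transpose (hgpHX H₁ H₂)]
    rfl
  have h4 : finrank (ZMod 2) (LinearMap.ker (hgpHZ H₁ H₂).mulVecLin) + (hgpHZ H₁ H₂).rank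
      = n₁ * n₂ + m₁ * m₂ := by
    have h5 := LinearMap.finrank_range_add_finrank_ker (hgpHZ H₁ H₂).mulVecLin
    have h6 : finrank (ZMod 2) (LinearMap.range (hgpHZ H₁ H₂).mulVecLin)
        = (hgpHZ H₁ H₂).rank := rfl
    rw [h6, Module.finrank_pi, Fintype.card_sum, Fintype.card_prod, Fintype.card_prod,
      Fintype.card_fin, Fintype.card_fin, Fintype.card_fin, Fintype.card_fin] at h5
    omega
  have hX := rank_hgpHX_eq H₁ H₂
  have hZ := rank_hgpHZ_eq H₁ H₂
  obtain ⟨k₁, hk₁⟩ := Nat.exists_eq_add_of_le (Matrix.rank_le_width H₁)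
  obtain ⟨k₂, hk₂⟩ := Nat.exists_eq_add_of_le (Matrix.rank_le_width H₂)
  obtain ⟨l₁, hl₁⟩ := Nat.exists_eq_add_of_le (Matrix.rank_le_height H₁)
  obtain ⟨l₂, hl₂⟩ := Nat.exists_eq_add_of_le (Matrix.rank_le_height H₂)
  have g1 : n₁ - H₁.rank = k₁ := by omega
  have g2 : n₂ - H₂.rank = k₂ := by omega
  have g3 : m₁ - H₁.rank = l₁ := by omega
  have g4 : m₂ - H₂.rank = l₂ := by omega
  rw [g1, g2, g3, g4]
  rw [h2, h3] at h1
  zify at h1 h4 hX hZ hk₁ hk₂ hl₁ hl₂ ⊢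
  linear_combination h1 + h4 - hX - hZ + ((n₂ : ℤ) - H₂.rank) * hk₁ + (k₁ : ℤ) * hk₂
    + ((m₂ : ℤ) - H₂.rank) * hl₁ + (l₁ : ℤ) * hl₂
end

section
/- Distances of the thickened code: Let H_X ∈ 𝔽₂^{m_X×n} and H_Z ∈ 𝔽₂^{m_Z×n} satisfy H_X·H_Zᵀ = 0, and assume there exists v ∈ ker H_X with v ∉ rs(H_Z) and there exists w ∈ ker H_Z with w ∉ rs(H_X). Define d_Z = min{ |v| : v ∈ ker H_X, v ∉ rs(H_Z) } and d_X = min{ |w| : w ∈ ker H_Z, w ∉ rs(H_X) }. Then for every ℓ ≥ 2, the thickened code satisfies min{ |ṽ| : ṽ ∈ ker H̃_X, ṽ ∉ rs(H̃_Z) } = d_Z and min{ |w̃| : w̃ ∈ ker H̃_Z, w̃ ∉ rs(H̃_X) } = ℓ·d_X. -/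
open Matrix Kronecker

set_option linter.unusedSectionVars false
set_option maxHeartbeats 1000000

section charTwo

lemma z2_add_self (a : ZMod 2) : a + a = 0 := CharTwo.add_self_eq_zero a

lemma z2_eq_of_add_eq_zero {a b : ZMod 2} (h : a + b = 0) : a = b :=
  sub_eq_zero.mp (by rw [CharTwo.sub_eq_add]; exact h)

end charTwo

section hamming
variable {α β : Type*} [Fintype α] [Fintype β] [DecidableEq α] [DecidableEq β]

lemma hn_eq_sum (v : α → ZMod 2) : hammingNorm v = ∑ i, if v i ≠ 0 then 1 else 0 := by
  classical
  simp [hammingNorm, Finset.card_filter]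

lemma hn_sum_split (v : α ⊕ β → ZMod 2) :
    hammingNorm v = hammingNorm (v ∘ Sum.inl) + hammingNorm (v ∘ Sum.inr) := by
  simp only [hn_eq_sum, Fintype.sum_sum_type]; rfl

lemma hn_prod_eq (v : α × β → ZMod 2) :
    hammingNorm v = ∑ b, hammingNorm (fun a => v (a, b)) := by
  simp only [hn_eq_sum, Fintype.sum_prod_type]
  rw [Finset.sum_comm]

lemma hn_add_le (x y : α → ZMod 2) :
    hammingNorm (x + y) ≤ hammingNorm x + hammingNorm y := by
  classical
  simp only [hammingNorm]
  refine le_trans (Finset.card_le_card ?_) (Finset.card_union_le _ _)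
  intro i hi
  simp only [Finset.mem_filter, Finset.mem_univ, true_and, Finset.mem_union, Pi.add_apply] at *
  by_contra h
  push_neg at h
  simp [h.1, h.2] at hi

lemma hn_finsum_le {γ : Type*} (s : Finset γ) (f : γ → α → ZMod 2) :
    hammingNorm (∑ c ∈ s, f c) ≤ ∑ c ∈ s, hammingNorm (f c) := by
  classical
  induction s using Finset.cons_induction with
  | empty => simp
  | cons a s ha ih =>
      rw [Finset.sum_cons, Finset.sum_cons]
      exact le_trans (hn_add_le _ _) (by omega)

end hamming

lemma mem_rowSpace_iff {m n : Type*} [Fintype m] (A : Matrix m n (ZMod 2)) (v : n → ZMod 2) :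
    v ∈ rowSpace A ↔ ∃ c : m → ZMod 2, ∑ a, c a • A a = v :=
  Submodule.mem_span_range_iff_exists_fun _

lemma mulVec_zero_of_mem_rowSpace {m n k : Type*} [Fintype n]
    (M : Matrix k n (ZMod 2)) (A : Matrix m n (ZMod 2))
    (h : ∀ r, M.mulVec (A r) = 0) {u : n → ZMod 2} (hu : u ∈ rowSpace A) :
    M.mulVec u = 0 := by
  refine Submodule.span_induction (p := fun x _ => M.mulVec x = 0) ?_ ?_ ?_ ?_ hu
  · rintro x ⟨r, rfl⟩; exact h r
  · simp [Matrix.mulVec_zero]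
  · intro x y _ _ hx hy; rw [Matrix.mulVec_add, hx, hy, add_zero]
  · intro a x _ hx; rw [Matrix.mulVec_smul, hx, smul_zero]

section finrep

/-- left endpoint of the support of row `σ` of `repH ℓ`, as an element of `Fin ℓ`. -/
def eA {ℓ : ℕ} (σ : Fin (ℓ - 1)) : Fin ℓ := ⟨σ.1, by have := σ.2; omega⟩
/-- right endpoint. -/
def eB {ℓ : ℕ} (σ : Fin (ℓ - 1)) : Fin ℓ := ⟨σ.1 + 1, by have := σ.2; omega⟩

lemma sum_fin_eq {ℓ : ℕ} {M : Type*} [AddCommMonoid M] (t : ℕ) (ht : t < ℓ) (f : Fin ℓ → M) :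
    ∑ τ : Fin ℓ, (if τ.val = t then f τ else 0) = f ⟨t, ht⟩ := by
  have : ∀ τ : Fin ℓ, (if τ.val = t then f τ else 0) = (if τ = ⟨t, ht⟩ then f τ else 0) := by
    intro τ; congr 1; simp [Fin.ext_iff]
  rw [Finset.sum_congr rfl (fun τ _ => this τ), Finset.sum_ite_eq']
  simp

lemma sum_repH_mul {ℓ : ℕ} (σ : Fin (ℓ - 1)) (g : Fin ℓ → ZMod 2) :
    ∑ τ : Fin ℓ, repH ℓ σ τ * g τ = g (eA σ) + g (eB σ) := by
  have hσ := σ.2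
  have key : ∀ τ : Fin ℓ, repH ℓ σ τ * g τ
      = (if τ.val = σ.val then g τ else 0) + (if τ.val = σ.val + 1 then g τ else 0) := by
    intro τ
    simp only [repH, Matrix.of_apply]
    split_ifs with h h1 h2 h1 h2 <;> first | (exfalso; omega) | ring
  rw [Finset.sum_congr rfl (fun τ _ => key τ), Finset.sum_add_distrib,
    sum_fin_eq σ.1 (by omega), sum_fin_eq (σ.1+1) (by omega)]
  rfl

/-- sum over rows of `repH` against shifted values -/
lemma sum_repH_shift {ℓ : ℕ} (τ : Fin ℓ) (G : ℕ → ZMod 2) (hG0 : G 0 = 0)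
    (hG : ∀ t, ℓ ≤ t → G t = 0) :
    ∑ σ : Fin (ℓ - 1), repH ℓ σ τ * G (σ.val + 1) = G τ.val + G (τ.val + 1) := by
  have hτ := τ.2
  have key : ∀ σ : Fin (ℓ - 1), repH ℓ σ τ * G (σ.val + 1)
      = (if σ.val = τ.val then G (σ.val + 1) else 0)
        + (if σ.val + 1 = τ.val then G (σ.val + 1) else 0) := by
    intro σ
    simp only [repH, Matrix.of_apply]
    split_ifs with h h1 h2 h1 h2 <;> first | (exfalso; omega) | ring
  rw [Finset.sum_congr rfl (fun σ _ => key σ), Finset.sum_add_distrib]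
  rcases Nat.lt_or_ge τ.val (ℓ - 1) with h | h
  · rw [show (∑ σ : Fin (ℓ-1), if σ.val = τ.val then G (σ.val+1) else 0) = G (τ.val + 1) from
      by rw [sum_fin_eq τ.val h]]
    rcases Nat.eq_zero_or_pos τ.val with h0 | h0
    · rw [h0, hG0]
      have : ∀ σ : Fin (ℓ-1), (if σ.val + 1 = 0 then G (σ.val+1) else 0) = 0 := by
        intro σ; rw [if_neg (by omega)]
      rw [Finset.sum_congr rfl (fun σ _ => this σ)]
      simp [add_comm]
    · have : ∀ σ : Fin (ℓ-1), (if σ.val + 1 = τ.val then G (σ.val+1) else 0)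
          = (if σ.val = τ.val - 1 then G (σ.val+1) else 0) := by
        intro σ; congr 1; simp only [eq_iff_iff]; omega
      rw [Finset.sum_congr rfl (fun σ _ => this σ), sum_fin_eq (τ.val - 1) (by omega)]
      have : τ.val - 1 + 1 = τ.val := by omega
      rw [this, add_comm]
  · have h1 : ∀ σ : Fin (ℓ-1), (if σ.val = τ.val then G (σ.val+1) else 0) = 0 := by
      intro σ; rw [if_neg (by have := σ.2; omega)]
    rw [Finset.sum_congr rfl (fun σ _ => h1 σ), Finset.sum_const_zero, zero_add,
      hG (τ.val + 1) (by omega)]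
    rcases Nat.eq_zero_or_pos τ.val with h0 | h0
    · rw [h0, hG0]
      have : ∀ σ : Fin (ℓ-1), (if σ.val + 1 = 0 then G (σ.val+1) else 0) = 0 := by
        intro σ; rw [if_neg (by omega)]
      rw [Finset.sum_congr rfl (fun σ _ => this σ)]; simp
    · have : ∀ σ : Fin (ℓ-1), (if σ.val + 1 = τ.val then G (σ.val+1) else 0)
          = (if σ.val = τ.val - 1 then G (σ.val+1) else 0) := by
        intro σ; congr 1; simp only [eq_iff_iff]; omega
      rw [Finset.sum_congr rfl (fun σ _ => this σ), sum_fin_eq (τ.val - 1) (by omega)]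
      have : τ.val - 1 + 1 = τ.val := by omega
      rw [this, add_zero]

end finrep

section thickLemmas
open Matrix
variable {mX mZ n ℓ : ℕ} (HX : Matrix (Fin mX) (Fin n) (ZMod 2))
  (HZ : Matrix (Fin mZ) (Fin n) (ZMod 2))

lemma tHX_inl (a : Fin mX) (τ : Fin ℓ) (i : Fin n) (σ : Fin ℓ) :
    thickHX HX ℓ (a, τ) (Sum.inl (i, σ)) = HX a i * (if τ = σ then 1 else 0) := by
  simp [thickHX, Matrix.one_apply]

lemma tHX_inr (a : Fin mX) (τ : Fin ℓ) (b : Fin mX) (σ : Fin (ℓ-1)) :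
    thickHX HX ℓ (a, τ) (Sum.inr (b, σ)) = (if a = b then 1 else 0) * repH ℓ σ τ := by
  simp [thickHX, Matrix.one_apply, Matrix.transpose_apply]

lemma tHZ_inl_inl (c : Fin mZ) (τ : Fin ℓ) (i : Fin n) (σ : Fin ℓ) :
    thickHZ HX HZ ℓ (Sum.inl (c, τ)) (Sum.inl (i, σ)) = HZ c i * (if τ = σ then 1 else 0) := by
  simp [thickHZ, Matrix.one_apply]

lemma tHZ_inl_inr (c : Fin mZ) (τ : Fin ℓ) (b : Fin mX) (σ : Fin (ℓ-1)) :
    thickHZ HX HZ ℓ (Sum.inl (c, τ)) (Sum.inr (b, σ)) = 0 := by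
  simp [thickHZ]

lemma tHZ_inr_inl (j : Fin n) (σ' : Fin (ℓ-1)) (i : Fin n) (τ : Fin ℓ) :
    thickHZ HX HZ ℓ (Sum.inr (j, σ')) (Sum.inl (i, τ)) = (if j = i then 1 else 0) * repH ℓ σ' τ := by
  simp [thickHZ, Matrix.one_apply]

lemma tHZ_inr_inr (j : Fin n) (σ' : Fin (ℓ-1)) (b : Fin mX) (σ : Fin (ℓ-1)) :
    thickHZ HX HZ ℓ (Sum.inr (j, σ')) (Sum.inr (b, σ)) = HX b j * (if σ' = σ then 1 else 0) := by
  simp [thickHZ, Matrix.one_apply, Matrix.transpose_apply]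

lemma tHX_mulVec (v : (Fin n × Fin ℓ) ⊕ (Fin mX × Fin (ℓ-1)) → ZMod 2) (a : Fin mX) (τ : Fin ℓ) :
    (thickHX HX ℓ).mulVec v (a, τ)
      = (∑ i, HX a i * v (Sum.inl (i, τ))) + ∑ σ, repH ℓ σ τ * v (Sum.inr (a, σ)) := by
  rw [Matrix.mulVec, dotProduct, Fintype.sum_sum_type]
  congr 1
  · rw [Fintype.sum_prod_type]
    refine Finset.sum_congr rfl fun i _ => ?_
    rw [Finset.sum_eq_single τ]
    · rw [tHX_inl]; simp
    · intro σ _ hσ; rw [tHX_inl]; simp [Ne.symm hσ]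
    · simp
  · rw [Fintype.sum_prod_type]
    rw [Finset.sum_eq_single a]
    · refine Finset.sum_congr rfl fun σ _ => ?_; rw [tHX_inr]; simp
    · intro b _ hb
      refine Finset.sum_eq_zero fun σ _ => ?_
      rw [tHX_inr]; simp [Ne.symm hb]
    · simp

lemma tHZ_mulVec_inl (w : (Fin n × Fin ℓ) ⊕ (Fin mX × Fin (ℓ-1)) → ZMod 2) (c : Fin mZ) (τ : Fin ℓ) :
    (thickHZ HX HZ ℓ).mulVec w (Sum.inl (c, τ)) = ∑ i, HZ c i * w (Sum.inl (i, τ)) := by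
  rw [Matrix.mulVec, dotProduct, Fintype.sum_sum_type]
  have h2 : ∑ p : Fin mX × Fin (ℓ-1), thickHZ HX HZ ℓ (Sum.inl (c,τ)) (Sum.inr p) * w (Sum.inr p) = 0 := by
    refine Finset.sum_eq_zero fun p _ => ?_
    rw [show (p : Fin mX × Fin (ℓ-1)) = (p.1, p.2) from rfl, tHZ_inl_inr]; ring
  rw [h2, add_zero, Fintype.sum_prod_type]
  refine Finset.sum_congr rfl fun i _ => ?_
  rw [Finset.sum_eq_single τ]
  · rw [tHZ_inl_inl]; simp
  · intro σ _ hσ; rw [tHZ_inl_inl]; simp [Ne.symm hσ]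
  · simp

lemma tHZ_mulVec_inr (w : (Fin n × Fin ℓ) ⊕ (Fin mX × Fin (ℓ-1)) → ZMod 2) (i : Fin n) (σ : Fin (ℓ-1)) :
    (thickHZ HX HZ ℓ).mulVec w (Sum.inr (i, σ))
      = (∑ τ, repH ℓ σ τ * w (Sum.inl (i, τ))) + ∑ a, HX a i * w (Sum.inr (a, σ)) := by
  rw [Matrix.mulVec, dotProduct, Fintype.sum_sum_type]
  congr 1
  · rw [Fintype.sum_prod_type, Finset.sum_eq_single i]
    · refine Finset.sum_congr rfl fun τ _ => ?_; rw [tHZ_inr_inl]; simp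
    · intro j _ hj
      refine Finset.sum_eq_zero fun τ _ => ?_
      rw [tHZ_inr_inl, if_neg (Ne.symm hj)]; ring
    · simp
  · rw [Fintype.sum_prod_type]
    refine Finset.sum_congr rfl fun a _ => ?_
    rw [Finset.sum_eq_single σ]
    · rw [tHZ_inr_inr]; simp
    · intro σ' _ hσ'; rw [tHZ_inr_inr]; simp [Ne.symm hσ']
    · simp

lemma hCSS_entry (hCSS : HX * HZᵀ = 0) (a : Fin mX) (c : Fin mZ) :
    ∑ i, HX a i * HZ c i = 0 := by
  have := congrFun (congrFun hCSS a) c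
  simpa [Matrix.mul_apply, Matrix.transpose_apply] using this

/-- every row of `thickHZ` is in the kernel of `thickHX`. -/
lemma tHZ_row_ker (hCSS : HX * HZᵀ = 0) (r) :
    (thickHX HX ℓ).mulVec (thickHZ HX HZ ℓ r) = 0 := by
  funext p
  obtain ⟨a, τ⟩ := p
  rw [show ((a,τ) : Fin mX × Fin ℓ) = (a,τ) from rfl]
  rcases r with ⟨c, τ'⟩ | ⟨j, σ'⟩
  · rw [tHX_mulVec]
    have h2 : ∑ σ : Fin (ℓ-1), repH ℓ σ τ * thickHZ HX HZ ℓ (Sum.inl (c,τ')) (Sum.inr (a,σ)) = 0 := by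
      refine Finset.sum_eq_zero fun σ _ => ?_
      rw [tHZ_inl_inr]; ring
    rw [h2, add_zero]
    have h1 : ∀ i, HX a i * thickHZ HX HZ ℓ (Sum.inl (c,τ')) (Sum.inl (i,τ))
        = (HX a i * HZ c i) * (if τ' = τ then 1 else 0) := by
      intro i; rw [tHZ_inl_inl]; ring
    rw [Finset.sum_congr rfl (fun i _ => h1 i), ← Finset.sum_mul]
    have h3 : (∑ i, HX a i * HZ c i) = 0 := hCSS_entry HX HZ hCSS a c
    rw [h3, zero_mul]; rfl
  · rw [tHX_mulVec]
    have h1 : ∀ i, HX a i * thickHZ HX HZ ℓ (Sum.inr (j,σ')) (Sum.inl (i,τ))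
        = (if i = j then HX a j * repH ℓ σ' τ else 0) := by
      intro i; rw [tHZ_inr_inl]
      rcases eq_or_ne i j with h | h
      · subst h; rw [if_pos rfl, if_pos rfl]; ring
      · rw [if_neg (Ne.symm h), if_neg h]; ring
    rw [Finset.sum_congr rfl (fun i _ => h1 i), Finset.sum_ite_eq']
    have h2 : ∀ σ : Fin (ℓ-1), repH ℓ σ τ * thickHZ HX HZ ℓ (Sum.inr (j,σ')) (Sum.inr (a,σ))
        = (if σ = σ' then repH ℓ σ' τ * HX a j else 0) := by
      intro σ; rw [tHZ_inr_inr]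
      rcases eq_or_ne σ σ' with h | h
      · subst h; rw [if_pos rfl, if_pos rfl]; ring
      · rw [if_neg (Ne.symm h), if_neg h]; ring
    rw [Finset.sum_congr rfl (fun σ _ => h2 σ), Finset.sum_ite_eq']
    simp only [Finset.mem_univ, if_true, Pi.zero_apply]
    rw [mul_comm]
    exact z2_add_self _

/-- every row of `thickHX` is in the kernel of `thickHZ`. -/
lemma tHX_row_ker (hCSS : HX * HZᵀ = 0) (r) :
    (thickHZ HX HZ ℓ).mulVec (thickHX HX ℓ r) = 0 := by
  obtain ⟨a, τ⟩ := r
  funext x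
  rcases x with ⟨c, τ'⟩ | ⟨i, σ⟩
  · rw [tHZ_mulVec_inl]
    have h1 : ∀ i, HZ c i * thickHX HX ℓ (a,τ) (Sum.inl (i,τ'))
        = (HX a i * HZ c i) * (if τ = τ' then 1 else 0) := by
      intro i; rw [tHX_inl]; ring
    rw [Finset.sum_congr rfl (fun i _ => h1 i), ← Finset.sum_mul, hCSS_entry HX HZ hCSS a c,
      zero_mul]; rfl
  · rw [tHZ_mulVec_inr]
    have h1 : ∀ τ', repH ℓ σ τ' * thickHX HX ℓ (a,τ) (Sum.inl (i,τ'))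
        = (if τ' = τ then repH ℓ σ τ * HX a i else 0) := by
      intro τ'; rw [tHX_inl]
      rcases eq_or_ne τ' τ with h | h
      · subst h; rw [if_pos rfl, if_pos rfl]; ring
      · rw [if_neg (Ne.symm h), if_neg h]; ring
    rw [Finset.sum_congr rfl (fun τ' _ => h1 τ'), Finset.sum_ite_eq']
    have h2 : ∀ b, HX b i * thickHX HX ℓ (a,τ) (Sum.inr (b,σ))
        = (if b = a then HX a i * repH ℓ σ τ else 0) := by
      intro b; rw [tHX_inr]
      rcases eq_or_ne b a with h | h
      · subst h; rw [if_pos rfl, if_pos rfl]; ring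
      · rw [if_neg (Ne.symm h), if_neg h]; ring
    rw [Finset.sum_congr rfl (fun b _ => h2 b), Finset.sum_ite_eq']
    simp only [Finset.mem_univ, if_true, Pi.zero_apply]
    rw [mul_comm (repH ℓ σ τ)]
    exact z2_add_self _

end thickLemmas

section claim1
open Matrix
variable {mX mZ n ℓ : ℕ} (HX : Matrix (Fin mX) (Fin n) (ZMod 2))
  (HZ : Matrix (Fin mZ) (Fin n) (ZMod 2))

/-- sum of all sheets -/
def phiMap {n ℓ mX : ℕ} (v : (Fin n × Fin ℓ) ⊕ (Fin mX × Fin (ℓ - 1)) → ZMod 2) :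
    Fin n → ZMod 2 :=
  fun i => ∑ τ : Fin ℓ, v (Sum.inl (i, τ))

lemma nu_step {ℓ : ℕ} (f : Fin ℓ → ZMod 2) (t : ℕ) (ht : t < ℓ) :
    (∑ τ : Fin ℓ, if t ≤ τ.val then f τ else 0)
      + (∑ τ : Fin ℓ, if t + 1 ≤ τ.val then f τ else 0) = f ⟨t, ht⟩ := by
  rw [← Finset.sum_add_distrib]
  have key : ∀ τ : Fin ℓ, ((if t ≤ τ.val then f τ else 0) + (if t + 1 ≤ τ.val then f τ else 0))
      = if τ.val = t then f τ else 0 := by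
    intro τ
    split_ifs with h1 h2 h3 h2 <;> first | (exfalso; omega) | (try rw [z2_add_self]) <;> simp
  rw [Finset.sum_congr rfl (fun τ _ => key τ), sum_fin_eq t ht]

lemma phi_add (x y : (Fin n × Fin ℓ) ⊕ (Fin mX × Fin (ℓ - 1)) → ZMod 2) :
    phiMap (x + y) = phiMap x + phiMap y := by
  funext i; simp [phiMap, Finset.sum_add_distrib]

lemma phi_smul (a : ZMod 2) (x : (Fin n × Fin ℓ) ⊕ (Fin mX × Fin (ℓ - 1)) → ZMod 2) :
    phiMap (a • x) = a • phiMap x := by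
  funext i; simp [phiMap, Finset.mul_sum]

lemma phi_rowSpace {v : (Fin n × Fin ℓ) ⊕ (Fin mX × Fin (ℓ - 1)) → ZMod 2}
    (hv : v ∈ rowSpace (thickHZ HX HZ ℓ)) : phiMap v ∈ rowSpace HZ := by
  refine Submodule.span_induction (p := fun x _ => phiMap x ∈ rowSpace HZ) ?_ ?_ ?_ ?_ hv
  · rintro x ⟨r, rfl⟩
    rcases r with ⟨c, τ'⟩ | ⟨j, σ'⟩
    · have : phiMap (thickHZ HX HZ ℓ (Sum.inl (c, τ'))) = HZ c := by
        funext i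
        simp only [phiMap]
        have : ∀ τ : Fin ℓ, thickHZ HX HZ ℓ (Sum.inl (c, τ')) (Sum.inl (i, τ))
            = if τ = τ' then HZ c i else 0 := by
          intro τ; rw [tHZ_inl_inl]
          rcases eq_or_ne τ τ' with h | h
          · rw [if_pos h, if_pos h.symm]; simp
          · rw [if_neg (Ne.symm h), if_neg h]; ring
        rw [Finset.sum_congr rfl (fun τ _ => this τ), Finset.sum_ite_eq']
        simp
      rw [this]
      exact Submodule.subset_span (Set.mem_range_self c)
    · have : phiMap (thickHZ HX HZ ℓ (Sum.inr (j, σ'))) = 0 := by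
        funext i
        simp only [phiMap]
        have : ∀ τ : Fin ℓ, thickHZ HX HZ ℓ (Sum.inr (j, σ')) (Sum.inl (i, τ))
            = repH ℓ σ' τ * (if j = i then 1 else 0) := by
          intro τ; rw [tHZ_inr_inl]; ring
        rw [Finset.sum_congr rfl (fun τ _ => this τ), sum_repH_mul σ' (fun _ => _)]
        rw [z2_add_self]; rfl
      rw [this]
      exact Submodule.zero_mem _
  · show phiMap (0 : (Fin n × Fin ℓ) ⊕ (Fin mX × Fin (ℓ - 1)) → ZMod 2) ∈ rowSpace HZ
    have : phiMap (0 : (Fin n × Fin ℓ) ⊕ (Fin mX × Fin (ℓ - 1)) → ZMod 2) = 0 := by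
      funext i; simp [phiMap]
    rw [this]; exact Submodule.zero_mem _
  · intro x y _ _ hx hy; rw [phi_add]; exact Submodule.add_mem _ hx hy
  · intro a x _ hx; rw [phi_smul]; exact Submodule.smul_mem _ a hx

lemma phi_ker {v : (Fin n × Fin ℓ) ⊕ (Fin mX × Fin (ℓ - 1)) → ZMod 2}
    (hv : (thickHX HX ℓ).mulVec v = 0) : HX.mulVec (phiMap v) = 0 := by
  funext a
  have hv' : ∀ τ : Fin ℓ, ∑ i, HX a i * v (Sum.inl (i, τ))
      = ∑ σ, repH ℓ σ τ * v (Sum.inr (a, σ)) := by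
    intro τ
    apply z2_eq_of_add_eq_zero
    have := congrFun hv (a, τ)
    rw [tHX_mulVec] at this
    exact this
  rw [Matrix.mulVec, dotProduct]
  have h1 : ∀ i, HX a i * phiMap v i = ∑ τ : Fin ℓ, HX a i * v (Sum.inl (i, τ)) := by
    intro i; rw [phiMap, Finset.mul_sum]
  rw [Finset.sum_congr rfl (fun i _ => h1 i), Finset.sum_comm]
  rw [Finset.sum_congr rfl (fun τ _ => hv' τ), Finset.sum_comm]
  have h2 : ∀ σ : Fin (ℓ-1), ∑ τ : Fin ℓ, repH ℓ σ τ * v (Sum.inr (a, σ)) = 0 := by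
    intro σ
    rw [sum_repH_mul σ (fun _ => v (Sum.inr (a, σ))), z2_add_self]
  rw [Finset.sum_congr rfl (fun σ _ => h2 σ), Finset.sum_const_zero]
  rfl

lemma phi_norm_le (v : (Fin n × Fin ℓ) ⊕ (Fin mX × Fin (ℓ - 1)) → ZMod 2) :
    hammingNorm (phiMap v) ≤ hammingNorm v := by
  have h1 : phiMap (mX := mX) v = ∑ τ : Fin ℓ, (fun i => v (Sum.inl (i, τ))) := by
    funext i; rw [Finset.sum_apply]; rfl
  calc hammingNorm (phiMap v) ≤ ∑ τ : Fin ℓ, hammingNorm (fun i => v (Sum.inl (i, τ))) := by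
        rw [h1]; exact hn_finsum_le _ _
    _ = hammingNorm (v ∘ Sum.inl) := by
          rw [hn_prod_eq (v ∘ Sum.inl)]
          exact Finset.sum_congr rfl fun τ _ => rfl
    _ ≤ hammingNorm v := by rw [hn_sum_split v]; omega

lemma clean1 (hCSS : HX * HZᵀ = 0) {v : (Fin n × Fin ℓ) ⊕ (Fin mX × Fin (ℓ - 1)) → ZMod 2}
    (hv : (thickHX HX ℓ).mulVec v = 0) (hφ : phiMap v ∈ rowSpace HZ) :
    v ∈ rowSpace (thickHZ HX HZ ℓ) := by
  rw [mem_rowSpace_iff] at hφ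
  obtain ⟨lam, hlam⟩ := hφ
  rw [mem_rowSpace_iff]
  refine ⟨Sum.elim (fun p => if p.2.val = 0 then lam p.1 else 0)
      (fun p => ∑ τ : Fin ℓ, if p.2.val + 1 ≤ τ.val then v (Sum.inl (p.1, τ)) else 0), ?_⟩
  funext x
  rw [Finset.sum_apply, Fintype.sum_sum_type]
  simp only [Pi.smul_apply, smul_eq_mul, Sum.elim_inl, Sum.elim_inr]
  rcases x with ⟨i, τ₀⟩ | ⟨b, σ₀⟩
  · -- first block
    have S1 : ∑ p : Fin mZ × Fin ℓ, (if p.2.val = 0 then lam p.1 else 0)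
          * thickHZ HX HZ ℓ (Sum.inl p) (Sum.inl (i, τ₀))
        = (if τ₀.val = 0 then phiMap v i else 0) := by
      rw [Fintype.sum_prod_type]
      have inner : ∀ c, ∑ τ : Fin ℓ, (if τ.val = 0 then lam c else 0)
            * thickHZ HX HZ ℓ (Sum.inl (c, τ)) (Sum.inl (i, τ₀))
          = (if τ₀.val = 0 then lam c * HZ c i else 0) := by
        intro c
        have key : ∀ τ : Fin ℓ, (if τ.val = 0 then lam c else 0)
              * thickHZ HX HZ ℓ (Sum.inl (c, τ)) (Sum.inl (i, τ₀))
            = (if τ = τ₀ then (if τ.val = 0 then lam c * HZ c i else 0) else 0) := by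
          intro τ; rw [tHZ_inl_inl]
          rcases eq_or_ne τ τ₀ with h | h
          · rw [if_pos h, if_pos h]; split_ifs <;> ring
          · rw [if_neg h, if_neg h]; ring
        rw [Finset.sum_congr rfl (fun τ _ => key τ), Finset.sum_ite_eq' Finset.univ τ₀]
        simp only [Finset.mem_univ, if_true]
      rw [Finset.sum_congr rfl (fun c _ => inner c)]
      split_ifs with h
      · have := congrFun hlam i
        rw [Finset.sum_apply] at this
        simpa only [Pi.smul_apply, smul_eq_mul] using this
      · exact Finset.sum_const_zero
    have S2 : ∑ p : Fin n × Fin (ℓ-1),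
          (∑ τ : Fin ℓ, if p.2.val + 1 ≤ τ.val then v (Sum.inl (p.1, τ)) else 0)
          * thickHZ HX HZ ℓ (Sum.inr p) (Sum.inl (i, τ₀))
        = (if τ₀.val = 0 then 0
            else ∑ τ : Fin ℓ, if τ₀.val ≤ τ.val then v (Sum.inl (i, τ)) else 0)
          + ∑ τ : Fin ℓ, if τ₀.val + 1 ≤ τ.val then v (Sum.inl (i, τ)) else 0 := by
      rw [Fintype.sum_prod_type]
      set G : ℕ → ZMod 2 := fun t =>
        if t = 0 then 0 else ∑ τ : Fin ℓ, if t ≤ τ.val then v (Sum.inl (i, τ)) else 0 with hG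
      have collapse : ∀ j : Fin n, (∑ σ : Fin (ℓ-1),
            (∑ τ : Fin ℓ, if σ.val + 1 ≤ τ.val then v (Sum.inl (j, τ)) else 0)
            * thickHZ HX HZ ℓ (Sum.inr (j, σ)) (Sum.inl (i, τ₀)))
          = if j = i then ∑ σ : Fin (ℓ-1), repH ℓ σ τ₀ * G (σ.val + 1) else 0 := by
        intro j
        rcases eq_or_ne j i with h | h
        · subst h
          rw [if_pos rfl]
          refine Finset.sum_congr rfl fun σ _ => ?_
          have hGσ : G (σ.val + 1)
              = ∑ τ : Fin ℓ, if σ.val + 1 ≤ τ.val then v (Sum.inl (j, τ)) else 0 := by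
            simp only [hG]
            rw [if_neg (Nat.succ_ne_zero σ.val)]
          rw [tHZ_inr_inl, if_pos rfl, one_mul, hGσ]
          ring
        · rw [if_neg h]
          refine Finset.sum_eq_zero fun σ _ => ?_
          rw [tHZ_inr_inl, if_neg h]; ring
      rw [Finset.sum_congr rfl (fun j _ => collapse j), Finset.sum_ite_eq' Finset.univ i]
      simp only [Finset.mem_univ, if_true]
      have hGbig : ∀ t, ℓ ≤ t → G t = 0 := by
        intro t ht
        simp only [hG]
        split_ifs with h0
        · rfl
        · refine Finset.sum_eq_zero fun τ _ => ?_
          rw [if_neg (by have := τ.2; omega)]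
      rw [sum_repH_shift τ₀ G (by simp [hG]) hGbig]
      simp only [hG]
      rw [if_neg (Nat.succ_ne_zero τ₀.val)]
    rw [S1, S2]
    rcases eq_or_ne τ₀.val 0 with h | h
    · rw [if_pos h, if_pos h, zero_add]
      have hphi : phiMap (mX := mX) v i = ∑ τ : Fin ℓ, if (0:ℕ) ≤ τ.val then v (Sum.inl (i, τ)) else 0 := by
        rw [phiMap]
        exact Finset.sum_congr rfl fun τ _ => by rw [if_pos (Nat.zero_le _)]
      have hτ₀ : τ₀ = ⟨0, by omega⟩ := Fin.ext h
      rw [hphi, hτ₀]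
      have := nu_step (fun τ : Fin ℓ => v (Sum.inl (i, τ))) 0 (by have := τ₀.2; omega)
      simpa using this
    · rw [if_neg h, if_neg h, zero_add]
      have := nu_step (fun τ : Fin ℓ => v (Sum.inl (i, τ))) τ₀.val τ₀.2
      simpa using this
  · -- second block
    have S1 : ∑ p : Fin mZ × Fin ℓ, (if p.2.val = 0 then lam p.1 else 0)
          * thickHZ HX HZ ℓ (Sum.inl p) (Sum.inr (b, σ₀)) = 0 := by
      refine Finset.sum_eq_zero fun p _ => ?_
      rw [show (p : Fin mZ × Fin ℓ) = (p.1, p.2) from rfl, tHZ_inl_inr]; ring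
    have hv' : ∀ τ : Fin ℓ, ∑ j, HX b j * v (Sum.inl (j, τ))
        = ∑ σ, repH ℓ σ τ * v (Sum.inr (b, σ)) := by
      intro τ
      apply z2_eq_of_add_eq_zero
      have := congrFun hv (b, τ)
      rw [tHX_mulVec] at this
      exact this
    have S2 : ∑ p : Fin n × Fin (ℓ-1),
          (∑ τ : Fin ℓ, if p.2.val + 1 ≤ τ.val then v (Sum.inl (p.1, τ)) else 0)
          * thickHZ HX HZ ℓ (Sum.inr p) (Sum.inr (b, σ₀))
        = v (Sum.inr (b, σ₀)) := by
      rw [Fintype.sum_prod_type]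
      have collapse : ∀ j : Fin n, (∑ σ : Fin (ℓ-1),
            (∑ τ : Fin ℓ, if σ.val + 1 ≤ τ.val then v (Sum.inl (j, τ)) else 0)
            * thickHZ HX HZ ℓ (Sum.inr (j, σ)) (Sum.inr (b, σ₀)))
          = (∑ τ : Fin ℓ, if σ₀.val + 1 ≤ τ.val then v (Sum.inl (j, τ)) else 0) * HX b j := by
        intro j
        have key : ∀ σ : Fin (ℓ-1),
            (∑ τ : Fin ℓ, if σ.val + 1 ≤ τ.val then v (Sum.inl (j, τ)) else 0)
            * thickHZ HX HZ ℓ (Sum.inr (j, σ)) (Sum.inr (b, σ₀))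
            = if σ = σ₀ then (∑ τ : Fin ℓ, if σ.val + 1 ≤ τ.val then v (Sum.inl (j, τ)) else 0) * HX b j else 0 := by
          intro σ; rw [tHZ_inr_inr]
          rcases eq_or_ne σ σ₀ with h | h
          · rw [if_pos h, if_pos h]; ring
          · rw [if_neg h, if_neg h]; ring
        rw [Finset.sum_congr rfl (fun σ _ => key σ), Finset.sum_ite_eq' Finset.univ σ₀]
        simp only [Finset.mem_univ, if_true]
      rw [Finset.sum_congr rfl (fun j _ => collapse j)]
      -- now: ∑ j, (∑ τ, if σ₀+1 ≤ τ then v(inl(j,τ)) else 0) * HX b j = v (inr (b,σ₀))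
      have step1 : ∀ j : Fin n,
          (∑ τ : Fin ℓ, if σ₀.val + 1 ≤ τ.val then v (Sum.inl (j, τ)) else 0) * HX b j
          = ∑ τ : Fin ℓ, (if σ₀.val + 1 ≤ τ.val then HX b j * v (Sum.inl (j, τ)) else 0) := by
        intro j
        rw [Finset.sum_mul]
        refine Finset.sum_congr rfl fun τ _ => ?_
        split_ifs <;> ring
      rw [Finset.sum_congr rfl (fun j _ => step1 j), Finset.sum_comm]
      have step2 : ∀ τ : Fin ℓ,
          (∑ j, if σ₀.val + 1 ≤ τ.val then HX b j * v (Sum.inl (j, τ)) else 0)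
          = ∑ σ : Fin (ℓ-1), repH ℓ σ τ * (if σ₀.val + 1 ≤ τ.val then v (Sum.inr (b, σ)) else 0) := by
        intro τ
        rcases le_or_gt (σ₀.val + 1) τ.val with h | h
        · simp only [if_pos h]
          exact hv' τ
        · simp only [if_neg (not_le.mpr h)]
          simp
      rw [Finset.sum_congr rfl (fun τ _ => step2 τ), Finset.sum_comm]
      have step3 : ∀ σ : Fin (ℓ-1),
          (∑ τ : Fin ℓ, repH ℓ σ τ * (if σ₀.val + 1 ≤ τ.val then v (Sum.inr (b, σ)) else 0))
          = if σ = σ₀ then v (Sum.inr (b, σ)) else 0 := by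
        intro σ
        rw [sum_repH_mul σ (fun τ => if σ₀.val + 1 ≤ τ.val then v (Sum.inr (b, σ)) else 0)]
        have hA : (eA σ).val = σ.val := rfl
        have hB : (eB σ).val = σ.val + 1 := rfl
        simp only [hA, hB]
        have hσ := σ.2
        have hσ₀ := σ₀.2
        rcases lt_trichotomy σ.val σ₀.val with h | h | h
        · rw [if_neg (by omega), if_neg (by omega), if_neg (by simp [Fin.ext_iff]; omega)]
          simp
        · rw [if_neg (by omega), if_pos (by omega), if_pos (Fin.ext h)]
          simp
        · rw [if_pos (by omega), if_pos (by omega), if_neg (by simp [Fin.ext_iff]; omega)]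
          rw [z2_add_self]
      rw [Finset.sum_congr rfl (fun σ _ => step3 σ)]
      have : ∀ σ : Fin (ℓ-1), (if σ = σ₀ then v (Sum.inr (b, σ)) else 0)
          = if σ = σ₀ then v (Sum.inr (b, σ₀)) else 0 := by
        intro σ; rcases eq_or_ne σ σ₀ with h | h
        · subst h; rfl
        · rw [if_neg h, if_neg h]
      rw [Finset.sum_congr rfl (fun σ _ => this σ), Finset.sum_ite_eq' Finset.univ σ₀]
      simp
    rw [S1, S2, zero_add]
end claim1

section claim2
open Matrix
variable {mX mZ n ℓ : ℕ} (HX : Matrix (Fin mX) (Fin n) (ZMod 2))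
  (HZ : Matrix (Fin mZ) (Fin n) (ZMod 2))

lemma sheet_rowSpace {w : (Fin n × Fin ℓ) ⊕ (Fin mX × Fin (ℓ - 1)) → ZMod 2}
    (hw : w ∈ rowSpace (thickHX HX ℓ)) (τ : Fin ℓ) : sheet τ w ∈ rowSpace HX := by
  refine Submodule.span_induction (p := fun x _ => sheet τ x ∈ rowSpace HX) ?_ ?_ ?_ ?_ hw
  · rintro x ⟨⟨a, τ'⟩, rfl⟩
    have : sheet τ (thickHX HX ℓ (a, τ')) = (if τ' = τ then (1:ZMod 2) else 0) • HX a := by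
      funext i
      show thickHX HX ℓ (a, τ') (Sum.inl (i, τ)) = _
      rw [tHX_inl]
      simp only [Pi.smul_apply, smul_eq_mul]
      ring
    rw [this]
    exact Submodule.smul_mem _ _ (Submodule.subset_span (Set.mem_range_self a))
  · show sheet τ (0 : (Fin n × Fin ℓ) ⊕ (Fin mX × Fin (ℓ - 1)) → ZMod 2) ∈ rowSpace HX
    have : sheet (mX := mX) τ (0 : (Fin n × Fin ℓ) ⊕ (Fin mX × Fin (ℓ - 1)) → ZMod 2) = 0 := rfl
    rw [this]; exact Submodule.zero_mem _
  · intro x y _ _ hx hy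
    have : sheet τ (x + y) = sheet τ x + sheet τ y := rfl
    rw [this]; exact Submodule.add_mem _ hx hy
  · intro a x _ hx
    have : sheet τ (a • x) = a • sheet τ x := rfl
    rw [this]; exact Submodule.smul_mem _ _ hx

lemma sheet_ker {w : (Fin n × Fin ℓ) ⊕ (Fin mX × Fin (ℓ - 1)) → ZMod 2}
    (hw : (thickHZ HX HZ ℓ).mulVec w = 0) (τ : Fin ℓ) : HZ.mulVec (sheet τ w) = 0 := by
  funext c
  have := congrFun hw (Sum.inl (c, τ))
  rw [tHZ_mulVec_inl] at this
  exact this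

lemma z2_shift : ∀ x y z : ZMod 2, x + y + z = 0 → y = x + z := by decide

lemma sheet_coset {w : (Fin n × Fin ℓ) ⊕ (Fin mX × Fin (ℓ - 1)) → ZMod 2}
    (hw : (thickHZ HX HZ ℓ).mulVec w = 0) (σ : Fin (ℓ - 1)) :
    sheet (eB σ) w = sheet (eA σ) w + ∑ a : Fin mX, w (Sum.inr (a, σ)) • HX a := by
  funext i
  have h0 := congrFun hw (Sum.inr (i, σ))
  rw [tHZ_mulVec_inr, sum_repH_mul σ (fun τ => w (Sum.inl (i, τ)))] at h0
  have h1 : w (Sum.inl (i, eA σ)) + w (Sum.inl (i, eB σ))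
      + ∑ a, HX a i * w (Sum.inr (a, σ)) = 0 := h0
  have h2 := z2_shift _ _ _ h1
  show w (Sum.inl (i, eB σ)) = _
  rw [h2]
  simp only [Pi.add_apply, Finset.sum_apply, Pi.smul_apply, smul_eq_mul]
  show w (Sum.inl (i, eA σ)) + _ = _
  congr 1
  exact Finset.sum_congr rfl fun a _ => mul_comm _ _

lemma sheet_mem_all {w : (Fin n × Fin ℓ) ⊕ (Fin mX × Fin (ℓ - 1)) → ZMod 2}
    (hw : (thickHZ HX HZ ℓ).mulVec w = 0)
    (h0 : ∃ τ, sheet τ w ∈ rowSpace HX) : ∀ τ, sheet τ w ∈ rowSpace HX := by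
  have step : ∀ σ : Fin (ℓ - 1),
      (sheet (eA σ) w ∈ rowSpace HX ↔ sheet (eB σ) w ∈ rowSpace HX) := by
    intro σ
    have hc := sheet_coset HX HZ hw σ
    have hmem : (∑ a : Fin mX, w (Sum.inr (a, σ)) • HX a) ∈ rowSpace HX :=
      Submodule.sum_mem _ fun a _ =>
        Submodule.smul_mem _ _ (Submodule.subset_span (Set.mem_range_self a))
    constructor
    · intro h; rw [hc]; exact Submodule.add_mem _ h hmem
    · intro h
      rw [hc] at h
      have : sheet (eA σ) w = (sheet (eA σ) w + ∑ a : Fin mX, w (Sum.inr (a, σ)) • HX a)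
          + ∑ a : Fin mX, w (Sum.inr (a, σ)) • HX a := by
        rw [add_assoc]
        funext i
        simp only [Pi.add_apply]
        rw [z2_add_self, add_zero]
      rw [this]
      exact Submodule.add_mem _ h hmem
  have chain : ∀ t (ht : t < ℓ),
      (sheet ⟨t, ht⟩ w ∈ rowSpace HX ↔ sheet ⟨0, by omega⟩ w ∈ rowSpace HX) := by
    intro t
    induction t with
    | zero => intro ht; exact Iff.rfl
    | succ t ih =>
        intro ht
        have hσ : t < ℓ - 1 := by omega
        have h1 := step ⟨t, hσ⟩
        have hB : eB (⟨t, hσ⟩ : Fin (ℓ - 1)) = ⟨t + 1, ht⟩ := rfl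
        have hA : eA (⟨t, hσ⟩ : Fin (ℓ - 1)) = ⟨t, by omega⟩ := rfl
        rw [hB, hA] at h1
        exact h1.symm.trans (ih (by omega))
  obtain ⟨τ₀, hτ₀⟩ := h0
  have hzero : sheet ⟨0, by have := τ₀.2; omega⟩ w ∈ rowSpace HX := by
    have := chain τ₀.val τ₀.2
    rw [Fin.eta] at this
    exact this.mp hτ₀
  intro τ
  have := chain τ.val τ.2
  rw [Fin.eta] at this
  exact this.mpr hzero

lemma clean2 (hCSS : HX * HZᵀ = 0) {w : (Fin n × Fin ℓ) ⊕ (Fin mX × Fin (ℓ - 1)) → ZMod 2}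
    (hw : (thickHZ HX HZ ℓ).mulVec w = 0) (hs : ∀ τ, sheet τ w ∈ rowSpace HX) :
    w ∈ rowSpace (thickHX HX ℓ) := by
  have hlam := fun τ => (mem_rowSpace_iff HX (sheet τ w)).mp (hs τ)
  choose lam hlam using hlam
  set u : (Fin n × Fin ℓ) ⊕ (Fin mX × Fin (ℓ - 1)) → ZMod 2 :=
    w + ∑ p : Fin mX × Fin ℓ, lam p.2 p.1 • thickHX HX ℓ p with hu
  have hcombo_mem : (∑ p : Fin mX × Fin ℓ, lam p.2 p.1 • thickHX HX ℓ p)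
      ∈ rowSpace (thickHX HX ℓ) :=
    Submodule.sum_mem _ fun p _ =>
      Submodule.smul_mem _ _ (Submodule.subset_span (Set.mem_range_self p))
  suffices hu_mem : u ∈ rowSpace (thickHX HX ℓ) by
    have hwu : w = u + ∑ p : Fin mX × Fin ℓ, lam p.2 p.1 • thickHX HX ℓ p := by
      rw [hu, add_assoc]
      funext x
      simp only [Pi.add_apply]
      rw [z2_add_self, add_zero]
    rw [hwu]
    exact Submodule.add_mem _ hu_mem hcombo_mem
  have hu1 : ∀ (i : Fin n) (τ : Fin ℓ), u (Sum.inl (i, τ)) = 0 := by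
    intro i τ
    rw [hu]
    simp only [Pi.add_apply, Finset.sum_apply, Pi.smul_apply, smul_eq_mul]
    have hc : ∑ p : Fin mX × Fin ℓ, lam p.2 p.1 * thickHX HX ℓ p (Sum.inl (i, τ))
        = sheet τ w i := by
      rw [Fintype.sum_prod_type]
      have inner : ∀ a : Fin mX, ∑ τ' : Fin ℓ, lam τ' a * thickHX HX ℓ (a, τ') (Sum.inl (i, τ))
          = lam τ a * HX a i := by
        intro a
        have key : ∀ τ' : Fin ℓ, lam τ' a * thickHX HX ℓ (a, τ') (Sum.inl (i, τ))
            = if τ' = τ then lam τ a * HX a i else 0 := by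
          intro τ'
          rw [tHX_inl]
          rcases eq_or_ne τ' τ with h | h
          · subst h; rw [if_pos rfl, if_pos rfl]; ring
          · rw [if_neg h, if_neg h]; ring
        rw [Finset.sum_congr rfl (fun τ' _ => key τ'), Finset.sum_ite_eq' Finset.univ τ]
        simp
      rw [Finset.sum_congr rfl (fun a _ => inner a)]
      have := congrFun (hlam τ) i
      rw [Finset.sum_apply] at this
      simpa only [Pi.smul_apply, smul_eq_mul] using this
    rw [hc]
    exact z2_add_self _
  have huker : (thickHZ HX HZ ℓ).mulVec u = 0 := by
    rw [hu, Matrix.mulVec_add, hw, zero_add]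
    exact mulVec_zero_of_mem_rowSpace _ _ (tHX_row_ker HX HZ hCSS) hcombo_mem
  have hu2 : ∀ (i : Fin n) (σ : Fin (ℓ - 1)), ∑ a, HX a i * u (Sum.inr (a, σ)) = 0 := by
    intro i σ
    have h0 := congrFun huker (Sum.inr (i, σ))
    rw [tHZ_mulVec_inr] at h0
    have hz : (∑ τ, repH ℓ σ τ * u (Sum.inl (i, τ))) = 0 :=
      Finset.sum_eq_zero fun τ _ => by rw [hu1]; ring
    rw [hz, zero_add] at h0
    exact h0
  rw [mem_rowSpace_iff]
  refine ⟨fun p => ∑ σ : Fin (ℓ - 1), if σ.val + 1 ≤ p.2.val then u (Sum.inr (p.1, σ)) else 0, ?_⟩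
  funext x
  rw [Finset.sum_apply]
  simp only [Pi.smul_apply, smul_eq_mul]
  rcases x with ⟨i, τ₀⟩ | ⟨b, σ₀⟩
  · rw [hu1 i τ₀, Fintype.sum_prod_type]
    have inner : ∀ a : Fin mX, (∑ τ : Fin ℓ,
          (∑ σ : Fin (ℓ - 1), if σ.val + 1 ≤ τ.val then u (Sum.inr (a, σ)) else 0)
          * thickHX HX ℓ (a, τ) (Sum.inl (i, τ₀)))
        = (∑ σ : Fin (ℓ - 1), if σ.val + 1 ≤ τ₀.val then u (Sum.inr (a, σ)) else 0) * HX a i := by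
      intro a
      have key : ∀ τ : Fin ℓ,
          (∑ σ : Fin (ℓ - 1), if σ.val + 1 ≤ τ.val then u (Sum.inr (a, σ)) else 0)
          * thickHX HX ℓ (a, τ) (Sum.inl (i, τ₀))
          = if τ = τ₀ then
              (∑ σ : Fin (ℓ - 1), if σ.val + 1 ≤ τ₀.val then u (Sum.inr (a, σ)) else 0) * HX a i
            else 0 := by
        intro τ
        rw [tHX_inl]
        rcases eq_or_ne τ τ₀ with h | h
        · subst h; rw [if_pos rfl, if_pos rfl]; ring
        · rw [if_neg h, if_neg h]; ring
      rw [Finset.sum_congr rfl (fun τ _ => key τ), Finset.sum_ite_eq' Finset.univ τ₀]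
      simp
    rw [Finset.sum_congr rfl (fun a _ => inner a)]
    have swap : ∀ a : Fin mX,
        (∑ σ : Fin (ℓ - 1), if σ.val + 1 ≤ τ₀.val then u (Sum.inr (a, σ)) else 0) * HX a i
        = ∑ σ : Fin (ℓ - 1), if σ.val + 1 ≤ τ₀.val then HX a i * u (Sum.inr (a, σ)) else 0 := by
      intro a
      rw [Finset.sum_mul]
      exact Finset.sum_congr rfl fun σ _ => by split_ifs <;> ring
    rw [Finset.sum_congr rfl (fun a _ => swap a), Finset.sum_comm]
    refine Finset.sum_eq_zero fun σ _ => ?_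
    rcases le_or_gt (σ.val + 1) τ₀.val with h | h
    · simp only [if_pos h]
      exact hu2 i σ
    · simp only [if_neg (not_le.mpr h)]
      exact Finset.sum_const_zero
  · rw [Fintype.sum_prod_type]
    have collapse : ∀ a : Fin mX, (∑ τ : Fin ℓ,
          (∑ σ : Fin (ℓ - 1), if σ.val + 1 ≤ τ.val then u (Sum.inr (a, σ)) else 0)
          * thickHX HX ℓ (a, τ) (Sum.inr (b, σ₀)))
        = if a = b then ∑ τ : Fin ℓ, repH ℓ σ₀ τ
            * (∑ σ : Fin (ℓ - 1), if σ.val + 1 ≤ τ.val then u (Sum.inr (b, σ)) else 0) else 0 := by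
      intro a
      rcases eq_or_ne a b with h | h
      · subst h
        rw [if_pos rfl]
        refine Finset.sum_congr rfl fun τ _ => ?_
        rw [tHX_inr, if_pos rfl, one_mul]
        ring
      · rw [if_neg h]
        refine Finset.sum_eq_zero fun τ _ => ?_
        rw [tHX_inr, if_neg h]
        ring
    rw [Finset.sum_congr rfl (fun a _ => collapse a), Finset.sum_ite_eq' Finset.univ b]
    simp only [Finset.mem_univ, if_true]
    rw [sum_repH_mul σ₀ (fun τ => ∑ σ : Fin (ℓ - 1),
      if σ.val + 1 ≤ τ.val then u (Sum.inr (b, σ)) else 0)]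
    have hA : (eA σ₀).val = σ₀.val := rfl
    have hB : (eB σ₀).val = σ₀.val + 1 := rfl
    simp only [hA, hB]
    rw [← Finset.sum_add_distrib]
    have key : ∀ σ : Fin (ℓ - 1),
        ((if σ.val + 1 ≤ σ₀.val then u (Sum.inr (b, σ)) else 0)
          + (if σ.val + 1 ≤ σ₀.val + 1 then u (Sum.inr (b, σ)) else 0))
        = if σ.val = σ₀.val then u (Sum.inr (b, σ)) else 0 := by
      intro σ
      split_ifs with h1 h2 h3 h2 h3 <;> first | (exfalso; omega) | (try rw [z2_add_self]) <;> simp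
    rw [Finset.sum_congr rfl (fun σ _ => key σ), sum_fin_eq σ₀.val σ₀.2]
end claim2

section emb
open Matrix
variable {mX mZ n ℓ : ℕ} (HX : Matrix (Fin mX) (Fin n) (ZMod 2))
  (HZ : Matrix (Fin mZ) (Fin n) (ZMod 2))

/-- embed `v` on sheet 0 -/
def emb1 {n ℓ mX : ℕ} (v : Fin n → ZMod 2) :
    (Fin n × Fin ℓ) ⊕ (Fin mX × Fin (ℓ - 1)) → ZMod 2 :=
  Sum.elim (fun p => if p.2.val = 0 then v p.1 else 0) 0

/-- embed `w` on all sheets -/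
def emb2 {n ℓ mX : ℕ} (w : Fin n → ZMod 2) :
    (Fin n × Fin ℓ) ⊕ (Fin mX × Fin (ℓ - 1)) → ZMod 2 :=
  Sum.elim (fun p => w p.1) 0

lemma emb1_ker {v : Fin n → ZMod 2} (hv : HX.mulVec v = 0) :
    (thickHX HX ℓ).mulVec (emb1 v) = 0 := by
  funext p
  obtain ⟨a, τ⟩ := p
  rw [show ((a,τ) : Fin mX × Fin ℓ) = (a,τ) from rfl, tHX_mulVec]
  have h2 : (∑ σ : Fin (ℓ-1), repH ℓ σ τ * emb1 (mX := mX) (ℓ := ℓ) v (Sum.inr (a, σ))) = 0 :=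
    Finset.sum_eq_zero fun σ _ => by simp [emb1]
  rw [h2, add_zero]
  have h1 : ∀ i, HX a i * emb1 (mX := mX) (ℓ := ℓ) v (Sum.inl (i, τ))
      = if τ.val = 0 then HX a i * v i else 0 := by
    intro i
    simp only [emb1, Sum.elim_inl]
    split_ifs <;> ring
  rw [Finset.sum_congr rfl (fun i _ => h1 i)]
  split_ifs with h
  · have := congrFun hv a
    rw [Matrix.mulVec, dotProduct] at this
    simpa using this
  · simp

lemma emb1_phi (hℓ : 0 < ℓ) (v : Fin n → ZMod 2) :
    phiMap (emb1 (mX := mX) (ℓ := ℓ) v) = v := by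
  funext i
  rw [phiMap]
  have : ∀ τ : Fin ℓ, emb1 (mX := mX) (ℓ := ℓ) v (Sum.inl (i, τ))
      = if τ.val = 0 then v i else 0 := fun τ => rfl
  rw [Finset.sum_congr rfl (fun τ _ => this τ), sum_fin_eq 0 hℓ]

lemma emb1_norm (hℓ : 0 < ℓ) (v : Fin n → ZMod 2) :
    hammingNorm (emb1 (mX := mX) (ℓ := ℓ) v) = hammingNorm v := by
  rw [hn_sum_split]
  have h2 : hammingNorm ((emb1 (mX := mX) (ℓ := ℓ) v) ∘ Sum.inr) = 0 := by
    simp [hn_eq_sum, emb1]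
  have h1 : hammingNorm ((emb1 (mX := mX) (ℓ := ℓ) v) ∘ Sum.inl) = hammingNorm v := by
    rw [hn_prod_eq]
    have key : ∀ τ : Fin ℓ, hammingNorm (fun i => (emb1 (mX := mX) (ℓ := ℓ) v ∘ Sum.inl) (i, τ))
        = if τ.val = 0 then hammingNorm v else 0 := by
      intro τ
      rcases eq_or_ne τ.val 0 with h | h
      · rw [if_pos h]
        congr 1
        funext i
        simp [emb1, h]
      · rw [if_neg h]
        have : (fun i => (emb1 (mX := mX) (ℓ := ℓ) v ∘ Sum.inl) (i, τ)) = (fun _ => 0) := by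
          funext i; simp [emb1, h]
        rw [this]
        simp [hn_eq_sum]
    rw [Finset.sum_congr rfl (fun τ _ => key τ), sum_fin_eq 0 hℓ]
  omega

lemma emb2_ker {w : Fin n → ZMod 2} (hw : HZ.mulVec w = 0) :
    (thickHZ HX HZ ℓ).mulVec (emb2 (mX := mX) (ℓ := ℓ) w) = 0 := by
  funext x
  rcases x with ⟨c, τ⟩ | ⟨i, σ⟩
  · rw [tHZ_mulVec_inl]
    have := congrFun hw c
    rw [Matrix.mulVec, dotProduct] at this
    simpa [emb2] using this
  · rw [tHZ_mulVec_inr]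
    have h2 : (∑ a, HX a i * emb2 (mX := mX) (ℓ := ℓ) w (Sum.inr (a, σ))) = 0 :=
      Finset.sum_eq_zero fun a _ => by simp [emb2]
    rw [h2, add_zero]
    have : ∀ τ : Fin ℓ, emb2 (mX := mX) (ℓ := ℓ) w (Sum.inl (i, τ)) = w i := fun τ => rfl
    have h1 : (∑ τ : Fin ℓ, repH ℓ σ τ * emb2 (mX := mX) (ℓ := ℓ) w (Sum.inl (i, τ)))
        = w i + w i := by
      rw [Finset.sum_congr rfl (fun τ _ => by rw [this τ]), sum_repH_mul σ (fun _ => w i)]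
    rw [h1, z2_add_self]
    rfl

lemma emb2_norm (w : Fin n → ZMod 2) :
    hammingNorm (emb2 (mX := mX) (ℓ := ℓ) w) = ℓ * hammingNorm w := by
  rw [hn_sum_split]
  have h2 : hammingNorm ((emb2 (mX := mX) (ℓ := ℓ) w) ∘ Sum.inr) = 0 := by
    simp [hn_eq_sum, emb2]
  have h1 : hammingNorm ((emb2 (mX := mX) (ℓ := ℓ) w) ∘ Sum.inl) = ℓ * hammingNorm w := by
    rw [hn_prod_eq]
    have key : ∀ τ : Fin ℓ, hammingNorm (fun i => (emb2 (mX := mX) (ℓ := ℓ) w ∘ Sum.inl) (i, τ))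
        = hammingNorm w := fun τ => rfl
    rw [Finset.sum_congr rfl (fun τ _ => key τ), Finset.sum_const, Finset.card_univ,
      Fintype.card_fin, smul_eq_mul]
  omega

lemma sheets_norm_le (w : (Fin n × Fin ℓ) ⊕ (Fin mX × Fin (ℓ - 1)) → ZMod 2) :
    (∑ τ : Fin ℓ, hammingNorm (sheet τ w)) ≤ hammingNorm w := by
  rw [hn_sum_split w]
  have : hammingNorm (w ∘ Sum.inl) = ∑ τ : Fin ℓ, hammingNorm (sheet τ w) := by
    rw [hn_prod_eq]
    rfl
  omega

end emb

theorem thick_distances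
    {mX mZ n : ℕ}
    (HX : Matrix (Fin mX) (Fin n) (ZMod 2))
    (HZ : Matrix (Fin mZ) (Fin n) (ZMod 2))
    (hCSS : HX * HZᵀ = 0)
    (hexZ : ∃ v : Fin n → ZMod 2, HX.mulVec v = 0 ∧ v ∉ rowSpace HZ)
    (hexX : ∃ w : Fin n → ZMod 2, HZ.mulVec w = 0 ∧ w ∉ rowSpace HX)
    (dZ dX : ℕ)
    (hdZ : dZ = sInf {k : ℕ | ∃ v : Fin n → ZMod 2,
      HX.mulVec v = 0 ∧ v ∉ rowSpace HZ ∧ hammingNorm v = k})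
    (hdX : dX = sInf {k : ℕ | ∃ w : Fin n → ZMod 2,
      HZ.mulVec w = 0 ∧ w ∉ rowSpace HX ∧ hammingNorm w = k})
    (ℓ : ℕ) (hℓ : 2 ≤ ℓ) :
    sInf {k : ℕ | ∃ v : (Fin n × Fin ℓ) ⊕ (Fin mX × Fin (ℓ - 1)) → ZMod 2,
      (thickHX HX ℓ).mulVec v = 0 ∧ v ∉ rowSpace (thickHZ HX HZ ℓ) ∧
      hammingNorm v = k} = dZ ∧
    sInf {k : ℕ | ∃ w : (Fin n × Fin ℓ) ⊕ (Fin mX × Fin (ℓ - 1)) → ZMod 2,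
      (thickHZ HX HZ ℓ).mulVec w = 0 ∧ w ∉ rowSpace (thickHX HX ℓ) ∧
      hammingNorm w = k} = ℓ * dX := by
  have hℓ0 : 0 < ℓ := by omega
  constructor
  · -- Z-distance of the thickened code
    have hSne : {k : ℕ | ∃ v : Fin n → ZMod 2,
        HX.mulVec v = 0 ∧ v ∉ rowSpace HZ ∧ hammingNorm v = k}.Nonempty := by
      obtain ⟨v, h1, h2⟩ := hexZ
      exact ⟨hammingNorm v, v, h1, h2, rfl⟩
    have hdZmem := Nat.sInf_mem hSne
    rw [← hdZ] at hdZmem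
    obtain ⟨v₀, hv₀ker, hv₀rs, hv₀n⟩ := hdZmem
    have hmem : dZ ∈ {k : ℕ | ∃ v : (Fin n × Fin ℓ) ⊕ (Fin mX × Fin (ℓ - 1)) → ZMod 2,
        (thickHX HX ℓ).mulVec v = 0 ∧ v ∉ rowSpace (thickHZ HX HZ ℓ) ∧ hammingNorm v = k} := by
      refine ⟨emb1 v₀, emb1_ker HX hv₀ker, ?_, by rw [emb1_norm hℓ0 v₀, hv₀n]⟩
      intro h
      have h2 := phi_rowSpace HX HZ h
      rw [emb1_phi hℓ0] at h2
      exact hv₀rs h2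
    apply le_antisymm
    · exact Nat.sInf_le hmem
    · refine le_csInf ⟨dZ, hmem⟩ ?_
      rintro k ⟨v, hker, hrs, rfl⟩
      have h1 : phiMap v ∉ rowSpace HZ := fun h => hrs (clean1 HX HZ hCSS hker h)
      calc dZ ≤ hammingNorm (phiMap v) := by
            rw [hdZ]
            exact Nat.sInf_le ⟨phiMap v, phi_ker HX hker, h1, rfl⟩
        _ ≤ hammingNorm v := phi_norm_le v
  · -- X-distance of the thickened code
    have hSne : {k : ℕ | ∃ w : Fin n → ZMod 2,
        HZ.mulVec w = 0 ∧ w ∉ rowSpace HX ∧ hammingNorm w = k}.Nonempty := by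
      obtain ⟨w, h1, h2⟩ := hexX
      exact ⟨hammingNorm w, w, h1, h2, rfl⟩
    have hdXmem := Nat.sInf_mem hSne
    rw [← hdX] at hdXmem
    obtain ⟨w₀, hw₀ker, hw₀rs, hw₀n⟩ := hdXmem
    have hmem : ℓ * dX ∈ {k : ℕ | ∃ w : (Fin n × Fin ℓ) ⊕ (Fin mX × Fin (ℓ - 1)) → ZMod 2,
        (thickHZ HX HZ ℓ).mulVec w = 0 ∧ w ∉ rowSpace (thickHX HX ℓ) ∧ hammingNorm w = k} := by
      refine ⟨emb2 w₀, emb2_ker HX HZ hw₀ker, ?_, by rw [emb2_norm w₀, hw₀n]⟩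
      intro h
      have h2 := sheet_rowSpace HX h (⟨0, hℓ0⟩ : Fin ℓ)
      exact hw₀rs h2
    apply le_antisymm
    · exact Nat.sInf_le hmem
    · refine le_csInf ⟨ℓ * dX, hmem⟩ ?_
      rintro k ⟨w, hker, hrs, rfl⟩
      have hsheet : ∀ τ : Fin ℓ, sheet τ w ∉ rowSpace HX := by
        intro τ hmemτ
        exact hrs (clean2 HX HZ hCSS hker (sheet_mem_all HX HZ hker ⟨τ, hmemτ⟩))
      have hτ : ∀ τ : Fin ℓ, dX ≤ hammingNorm (sheet τ w) := by
        intro τ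
        rw [hdX]
        exact Nat.sInf_le ⟨sheet τ w, sheet_ker HX HZ hker τ, hsheet τ, rfl⟩
      calc ℓ * dX = ∑ _τ : Fin ℓ, dX := by
            rw [Finset.sum_const, Finset.card_univ, Fintype.card_fin, smul_eq_mul]
        _ ≤ ∑ τ : Fin ℓ, hammingNorm (sheet τ w) := Finset.sum_le_sum fun τ _ => hτ τ
        _ ≤ hammingNorm w := sheets_norm_le w
end
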